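/- arXiv:1712.00106 — 8 statements merged into one kernel-verified Lean document; each statement's English description precedes it below -/
import Mathlib

section
/- Let V : ℝ → ℝ be continuous, 1-periodic with max V = 0, let E > 0, ε > 0 and q_a ∈ ℝ. Define t_ε(q) = ∫_{q_a}^{q} 1/√(2(E − V(γ/ε))) dγ and σ(E) = ∫_0^1 1/√(2(E − V(γ))) dγ. Then for every q ≥ q_a, |t_ε(q) − σ(E)(q − q_a)| ≤ 2ε/√(2E). -/
open Real intervalIntegral

/-- Lemma 2.1: uniform estimate for the inverse-time function
    `t_ε(q) = ∫_{q_a}^q (2(E − V(γ/ε)))^{-1/2} dγ`. -/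
theorem time_estimate
    (V : ℝ → ℝ) (hV : Continuous V) (hper : Function.Periodic V 1)
    (hmax : IsGreatest (Set.range V) 0)
    (E ε q_a : ℝ) (hE : 0 < E) (hε : 0 < ε) :
    ∀ q : ℝ, q_a ≤ q →
      |(∫ γ in q_a..q, 1 / Real.sqrt (2 * (E - V (γ / ε)))) -
          (∫ γ in (0:ℝ)..1, 1 / Real.sqrt (2 * (E - V γ))) * (q - q_a)| ≤
        2 * ε / Real.sqrt (2 * E) := by
  intro q hq
  set f : ℝ → ℝ := fun x => 1 / Real.sqrt (2 * (E - V x)) with hf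
  have hVle : ∀ x, V x ≤ 0 := fun x => hmax.2 ⟨x, rfl⟩
  have hpos : ∀ x, 0 < 2 * (E - V x) := fun x => by nlinarith [hVle x]
  have hcont : Continuous f := by
    apply continuous_const.div
    · exact (continuous_const.mul (continuous_const.sub hV)).sqrt
    · intro x
      exact ne_of_gt (Real.sqrt_pos.mpr (hpos x))
  have hint : ∀ t₁ t₂ : ℝ, IntervalIntegrable f MeasureTheory.volume t₁ t₂ :=
    fun t₁ t₂ => hcont.intervalIntegrable t₁ t₂
  have hfper : Function.Periodic f 1 := fun x => by simp [hf, hper x]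
  set C : ℝ := 1 / Real.sqrt (2 * E) with hC
  have hCpos : 0 < C := by positivity
  have hfle : ∀ x, |f x| ≤ C := by
    intro x
    rw [abs_of_nonneg (by positivity)]
    exact one_div_le_one_div_of_le (Real.sqrt_pos.mpr (by linarith))
      (Real.sqrt_le_sqrt (by nlinarith [hVle x]))
  set σ : ℝ := ∫ γ in (0:ℝ)..1, f γ with hσ
  have hsub : (∫ γ in q_a..q, f (γ / ε)) = ε • ∫ u in q_a/ε..q/ε, f u :=
    intervalIntegral.integral_comp_div f (ne_of_gt hε)
  set a : ℝ := q_a / ε with ha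
  set b : ℝ := q / ε with hb
  have hab : a ≤ b := (div_le_div_iff_of_pos_right hε).mpr hq
  set n : ℤ := ⌊b - a⌋ with hn
  have hn0 : (0:ℝ) ≤ b - a := by linarith
  have hnle : (n:ℝ) ≤ b - a := Int.floor_le _
  have hnlt : b - a < n + 1 := Int.lt_floor_add_one _
  have hns : a + n • (1:ℝ) = a + (n:ℝ) := by rw [zsmul_eq_mul, mul_one]
  have hsplit : (∫ x in a..b, f x)
      = (∫ x in a..(a + n • (1:ℝ)), f x) + ∫ x in (a + n • (1:ℝ))..b, f x :=
    (intervalIntegral.integral_add_adjacent_intervals (hint _ _) (hint _ _)).symm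
  have hper_int : (∫ x in a..(a + (n:ℝ)), f x) = (n:ℝ) * σ := by
    rw [← hns]
    rw [hfper.intervalIntegral_add_zsmul_eq n a hint, hfper.intervalIntegral_add_eq a 0,
      zsmul_eq_mul]
    norm_num
    exact Or.inl hσ.symm
  have hσle : |σ| ≤ C := by
    have := intervalIntegral.norm_integral_le_of_norm_le_const
      (a := (0:ℝ)) (b := 1) (C := C) (f := f) (fun x _ => by simpa using hfle x)
    simpa using this
  rw [hns] at hsplit
  set J : ℝ := ∫ x in (a + (n:ℝ))..b, f x with hJ
  have hfrac : |J| ≤ C := by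
    have h1 : |b - (a + (n:ℝ))| ≤ 1 := by
      rw [abs_of_nonneg (by linarith)]; linarith
    have := intervalIntegral.norm_integral_le_of_norm_le_const
      (a := a + (n:ℝ)) (b := b) (C := C) (f := f) (fun x _ => by simpa using hfle x)
    calc |J| ≤ C * |b - (a + (n:ℝ))| := by simpa using this
      _ ≤ C * 1 := mul_le_mul_of_nonneg_left h1 hCpos.le
      _ = C := mul_one C
  have hmain : |(∫ x in a..b, f x) - σ * (b - a)| ≤ 2 * C := by
    have hd : |(n:ℝ) * σ - σ * (b - a)| ≤ C := by
      have h3 : (n:ℝ) * σ - σ * (b - a) = σ * ((n:ℝ) - (b - a)) := by ring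
      rw [h3, abs_mul]
      have h2 : |(n:ℝ) - (b - a)| ≤ 1 := by
        rw [abs_sub_comm, abs_of_nonneg (by linarith)]; linarith
      calc |σ| * |(n:ℝ) - (b - a)| ≤ C * 1 :=
            mul_le_mul hσle h2 (abs_nonneg _) hCpos.le
        _ = C := mul_one C
    have h4 : (∫ x in a..b, f x) - σ * (b - a)
        = ((n:ℝ) * σ - σ * (b - a)) + J := by
      rw [hsplit, hper_int]; ring
    calc |(∫ x in a..b, f x) - σ * (b - a)|
        = |((n:ℝ) * σ - σ * (b - a)) + J| := by rw [h4]
      _ ≤ |(n:ℝ) * σ - σ * (b - a)| + |J| := abs_add_le _ _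
      _ ≤ C + C := add_le_add hd hfrac
      _ = 2 * C := by ring
  have hqab : q - q_a = ε * (b - a) := by rw [ha, hb]; field_simp
  have h5 : (∫ γ in q_a..q, f (γ / ε)) - σ * (q - q_a)
      = ε * ((∫ x in a..b, f x) - σ * (b - a)) := by
    rw [hsub, hqab, smul_eq_mul]; ring
  calc |(∫ γ in q_a..q, f (γ / ε)) - σ * (q - q_a)|
      = ε * |(∫ x in a..b, f x) - σ * (b - a)| := by
        rw [h5, abs_mul, abs_of_pos hε]
    _ ≤ ε * (2 * C) := mul_le_mul_of_nonneg_left hmain hε.le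
    _ = 2 * ε / Real.sqrt (2 * E) := by rw [hC]; field_simp
end

section
/- Let V : ℝ → ℝ be C², 1-periodic with max V = 0, fix E > 0 and q_a ∈ ℝ. For each ε > 0 let q_ε : ℝ → ℝ solve q_ε'' (t) = −(1/ε) V'(q_ε(t)/ε) with q_ε(0) = q_a, q_ε'(0) > 0, and energy (1/2)|q_ε'(t)|² + V(q_ε(t)/ε) = E for all t. Then sup_{t ∈ ℝ} |q_ε(t) − (t/σ(E) + q_a)| ≤ (2ε/√(2E))/σ(E), where σ(E) = ∫_0^1 1/√(2(E − V(γ))) dγ. -/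
open Real intervalIntegral Filter

/-- Theorem 2.2: for the fixed-energy initial value problem, solutions converge
    uniformly (with rate ε) to the line `t ↦ t/σ(E) + q_a`. -/
theorem ivp_fixed_energy_uniform_convergence
    (V : ℝ → ℝ) (hV : ContDiff ℝ 2 V) (hper : Function.Periodic V 1)
    (hmax : IsGreatest (Set.range V) 0)
    (E q_a ε : ℝ) (hE : 0 < E) (hε : 0 < ε)
    (q q' : ℝ → ℝ)
    (hq : ∀ t, HasDerivAt q (q' t) t)
    (hODE : ∀ t, HasDerivAt q' (-(1 / ε) * deriv V (q t / ε)) t)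
    (h0 : q 0 = q_a) (h0' : 0 < q' 0)
    (henergy : ∀ t, (1 / 2) * (q' t) ^ 2 + V (q t / ε) = E) :
    ∀ t : ℝ,
      |q t - (t / (∫ γ in (0:ℝ)..1, 1 / Real.sqrt (2 * (E - V γ))) + q_a)| ≤
        (2 * ε / Real.sqrt (2 * E)) /
          (∫ γ in (0:ℝ)..1, 1 / Real.sqrt (2 * (E - V γ))) := by
  -- basic facts about V
  have hVle : ∀ γ, V γ ≤ 0 := fun γ => hmax.2 ⟨γ, rfl⟩
  have hEVpos : ∀ γ, (0:ℝ) < 2 * (E - V γ) := fun γ => by linarith [hVle γ]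
  set f : ℝ → ℝ := fun γ => 1 / Real.sqrt (2 * (E - V γ)) with hf_def
  have hsqrt_pos : ∀ γ, 0 < Real.sqrt (2 * (E - V γ)) :=
    fun γ => Real.sqrt_pos.2 (hEVpos γ)
  have hf_pos : ∀ γ, 0 < f γ := fun γ => one_div_pos.2 (hsqrt_pos γ)
  have hsE : 0 < Real.sqrt (2 * E) := Real.sqrt_pos.2 (by linarith)
  have hf_le : ∀ γ, f γ ≤ 1 / Real.sqrt (2 * E) := by
    intro γ
    apply one_div_le_one_div_of_le hsE
    exact Real.sqrt_le_sqrt (by linarith [hVle γ])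
  have hf_cont : Continuous f := by
    apply continuous_const.div
    · exact Real.continuous_sqrt.comp (continuous_const.mul (continuous_const.sub hV.continuous))
    · exact fun γ => ne_of_gt (hsqrt_pos γ)
  have hf_per : Function.Periodic f 1 := by
    intro x; simp only [hf_def, hper x]
  set σ : ℝ := ∫ γ in (0:ℝ)..1, f γ with hσ_def
  have hf_int : ∀ a b : ℝ, IntervalIntegrable f MeasureTheory.volume a b :=
    fun a b => hf_cont.intervalIntegrable a b
  have hσ_pos : 0 < σ :=
    intervalIntegral.intervalIntegral_pos_of_pos_on (hf_int 0 1)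
      (fun x _ => hf_pos x) one_pos
  have hσ_le : σ ≤ 1 / Real.sqrt (2 * E) := by
    calc σ ≤ ∫ _ in (0:ℝ)..1, 1 / Real.sqrt (2 * E) :=
          intervalIntegral.integral_mono_on zero_le_one (hf_int 0 1)
            intervalIntegrable_const (fun x _ => hf_le x)
      _ = 1 / Real.sqrt (2 * E) := by simp
  -- the antiderivative H
  set H : ℝ → ℝ := fun u => ∫ x in (0:ℝ)..u, f x with hH_def
  have hH_deriv : ∀ u, HasDerivAt H (f u) u := fun u =>
    (hf_cont.integral_hasStrictDerivAt 0 u).hasDerivAt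
  have hH_add : ∀ u, H (u + 1) = H u + σ := by
    intro u
    have h1 : ∫ x in u..(u+1), f x = ∫ x in (0:ℝ)..(0+1), f x :=
      hf_per.intervalIntegral_add_eq u 0
    have h2 : (H u + ∫ x in u..(u+1), f x) = H (u+1) :=
      intervalIntegral.integral_add_adjacent_intervals (hf_int 0 u) (hf_int u (u+1))
    simp only [zero_add] at h1
    rw [← h2, h1]
  -- the periodic part P
  set P : ℝ → ℝ := fun u => H u - σ * u with hP_def
  have hP_per : Function.Periodic P 1 := by
    intro u
    simp only [hP_def, hH_add u]
    ring
  have hP_bound : ∀ u, |P u| ≤ 1 / Real.sqrt (2 * E) := by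
    have hbase : ∀ u, 0 ≤ u → u ≤ 1 → |P u| ≤ 1 / Real.sqrt (2 * E) := by
      intro u hu0 hu1
      have hHnn : 0 ≤ H u :=
        intervalIntegral.integral_nonneg hu0 (fun x _ => (hf_pos x).le)
      have hHle : H u ≤ σ := by
        have hsum := intervalIntegral.integral_add_adjacent_intervals
          (hf_int 0 u) (hf_int u 1)
        have hnn : 0 ≤ ∫ x in u..1, f x :=
          intervalIntegral.integral_nonneg hu1 (fun x _ => (hf_pos x).le)
        rw [hσ_def, ← hsum]
        linarith
      have h1 : 0 ≤ σ * u := by positivity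
      have h2 : σ * u ≤ σ := by nlinarith
      rw [abs_le]
      constructor <;> simp only [hP_def] <;> nlinarith
    intro u
    have hp := hP_per.sub_int_mul_eq (x := u) ⌊u⌋
    rw [mul_one] at hp
    rw [← hp]
    exact hbase _ (by linarith [Int.floor_le u]) (by linarith [Int.lt_floor_add_one u])
  -- the velocity is positive and equals the square root
  have hq'_sq : ∀ t, (q' t) ^ 2 = 2 * (E - V (q t / ε)) := by
    intro t; linarith [henergy t]
  have hq'_ne : ∀ t, q' t ≠ 0 := by
    intro t h
    have hh := hq'_sq t
    rw [h] at hh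
    nlinarith [hVle (q t / ε)]
  have hq'_cont : Continuous q' :=
    continuous_iff_continuousAt.2 fun t => (hODE t).continuousAt
  have hq'_pos : ∀ t, 0 < q' t := by
    intro t
    by_contra h
    push_neg at h
    have hlt : q' t < 0 := lt_of_le_of_ne h (hq'_ne t)
    have h0mem : (0:ℝ) ∈ Set.uIcc (q' 0) (q' t) :=
      Set.mem_uIcc.2 (Or.inr ⟨hlt.le, h0'.le⟩)
    obtain ⟨s, _, hs⟩ := intermediate_value_uIcc (hq'_cont.continuousOn (s := Set.uIcc 0 t)) h0mem
    exact hq'_ne s hs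
  have hq'_eq : ∀ t, q' t = Real.sqrt (2 * (E - V (q t / ε))) := by
    intro t
    rw [← hq'_sq t, Real.sqrt_sq (hq'_pos t).le]
  -- the function t ↦ ε H(q t / ε) − t is constant
  have hg_deriv : ∀ t, HasDerivAt (fun t => ε * H (q t / ε) - t) 0 t := by
    intro t
    have h1 : HasDerivAt (fun x => H (x / ε)) (f (q t / ε) * (1 / ε)) (q t) :=
      by exact (hH_deriv (q t / ε)).comp (q t) ((hasDerivAt_id' (q t)).div_const ε)
    have h2 : HasDerivAt (fun t => H (q t / ε)) (f (q t / ε) * (1 / ε) * q' t) t :=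
      h1.comp t (hq t)
    have h3 := (h2.const_mul ε).sub (hasDerivAt_id t)
    have hfq : f (q t / ε) * q' t = 1 := by
      rw [hq'_eq t]
      simp only [hf_def]
      exact one_div_mul_cancel (hsqrt_pos _).ne'
    have hval : ε * (f (q t / ε) * (1 / ε) * q' t) - 1 = 0 := by
      calc ε * (f (q t / ε) * (1 / ε) * q' t) - 1
          = (f (q t / ε) * q' t) * (ε * (1 / ε)) - 1 := by ring
        _ = 0 := by rw [hfq, mul_one_div, div_self hε.ne', mul_one]; ring
    exact h3.congr_deriv hval
  have hconst : ∀ t : ℝ, ε * H (q t / ε) - t = ε * H (q 0 / ε) - 0 := fun t =>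
    is_const_of_deriv_eq_zero (fun s => (hg_deriv s).differentiableAt)
      (fun s => (hg_deriv s).deriv) t 0
  have key : ∀ t : ℝ, t = ε * H (q t / ε) - ε * H (q_a / ε) := by
    intro t
    have := hconst t
    rw [h0] at this
    linarith
  -- conclude
  intro t
  have hHu : ∀ u, H u = P u + σ * u := by
    intro u; simp only [hP_def]; ring
  have ht2 : t = σ * (q t - q_a) + ε * (P (q t / ε) - P (q_a / ε)) := by
    calc t = ε * H (q t / ε) - ε * H (q_a / ε) := key t
      _ = ε * (P (q t / ε) + σ * (q t / ε)) - ε * (P (q_a / ε) + σ * (q_a / ε)) := by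
          rw [hHu (q t / ε), hHu (q_a / ε)]
      _ = σ * (q t - q_a) + ε * (P (q t / ε) - P (q_a / ε)) := by
          field_simp
          ring
  have heq : q t - (t / σ + q_a) = -(ε * (P (q t / ε) - P (q_a / ε))) / σ := by
    have hσne : σ ≠ 0 := hσ_pos.ne'
    field_simp
    linarith [ht2]
  rw [heq, abs_div, abs_neg, abs_of_pos hσ_pos]
  apply (div_le_div_iff_of_pos_right hσ_pos).2
  · have hA := hP_bound (q t / ε)
    have hB := hP_bound (q_a / ε)
    have habs : |P (q t / ε) - P (q_a / ε)| ≤ 2 / Real.sqrt (2 * E) := by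
      calc |P (q t / ε) - P (q_a / ε)| ≤ |P (q t / ε)| + |P (q_a / ε)| := abs_sub _ _
        _ ≤ 2 / Real.sqrt (2 * E) := by
            have h22 : (2:ℝ) / Real.sqrt (2 * E) =
                1 / Real.sqrt (2 * E) + 1 / Real.sqrt (2 * E) := by ring
            linarith
    rw [abs_mul, abs_of_pos hε]
    calc ε * |P (q t / ε) - P (q_a / ε)| ≤ ε * (2 / Real.sqrt (2 * E)) := by
          exact mul_le_mul_of_nonneg_left habs hε.le
      _ = 2 * ε / Real.sqrt (2 * E) := by ring
end

section
/- Let V : ℝ → ℝ be C², 1-periodic with max V = 0, attaining its maximum at 0. Define σ(E) = ∫_0^1 1/√(2(E − V(γ))) dγ for E > 0. Then σ(E) → ∞ as E → 0⁺. -/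
open Real intervalIntegral Filter

/-- Lemma 2.3: `σ(E) = ∫_0^1 (2(E − V(γ)))^{-1/2} dγ` blows up as `E → 0⁺`. -/
theorem sigma_blow_up
    (V : ℝ → ℝ) (hV : ContDiff ℝ 2 V) (hper : Function.Periodic V 1)
    (hmax : IsGreatest (Set.range V) 0) (h0 : V 0 = 0) :
    Tendsto (fun E : ℝ => ∫ γ in (0:ℝ)..1, 1 / Real.sqrt (2 * (E - V γ)))
      (nhdsWithin 0 (Set.Ioi 0)) atTop := by
  -- V ≤ 0 everywhere
  have hVle : ∀ x, V x ≤ 0 := fun x => hmax.2 ⟨x, rfl⟩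
  -- regularity
  have hV' : ContDiff ℝ (1 + 1) V := by
    have h21 : (2 : WithTop ℕ∞) = 1 + 1 := by norm_num
    rwa [h21] at hV
  obtain ⟨hdiff, -, hC1⟩ := contDiff_succ_iff_deriv.mp hV'
  obtain ⟨hdiff1, hcont2⟩ := contDiff_one_iff_deriv.mp hC1
  -- derivative vanishes at 0
  have hder0 : deriv V 0 = 0 := by
    have hmx : IsLocalMax V 0 := by
      apply IsMaxOn.isLocalMax (s := Set.univ)
      · intro x _
        simpa [h0] using hVle x
      · exact Filter.univ_mem
    exact hmx.deriv_eq_zero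
  -- bound on second derivative on [0,1]
  obtain ⟨M, hM⟩ := (isCompact_Icc (a := (0:ℝ)) (b := 1)).exists_bound_of_continuousOn
    hcont2.continuousOn
  set c : ℝ := max 1 M with hc
  have hc1 : (1:ℝ) ≤ c := le_max_left _ _
  have hcpos : (0:ℝ) < c := lt_of_lt_of_le one_pos hc1
  have hsc : (0:ℝ) < Real.sqrt c := Real.sqrt_pos.mpr hcpos
  have hscsq : Real.sqrt c ^ 2 = c := Real.sq_sqrt hcpos.le
  -- |deriv V t| ≤ c * t on [0,1]
  have hlip : ∀ t ∈ Set.Icc (0:ℝ) 1, |deriv V t| ≤ c * t := by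
    intro t ht
    have h := norm_image_sub_le_of_norm_deriv_le_segment' (a := 0) (b := 1)
      (f := deriv V) (f' := deriv (deriv V))
      (fun x _ => (hdiff1 x).hasDerivAt.hasDerivWithinAt)
      (fun x hx => le_trans (hM x (Set.Ico_subset_Icc_self hx)) (le_max_right 1 M)) t ht
    simpa [hder0, Real.norm_eq_abs] using h
  -- V t ≥ -(c * t^2) on [0,1]
  have hVlb : ∀ t ∈ Set.Icc (0:ℝ) 1, -(c * t ^ 2) ≤ V t := by
    have hg : MonotoneOn (fun t => V t + c * t ^ 2) (Set.Icc 0 1) := by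
      apply monotoneOn_of_deriv_nonneg (convex_Icc _ _)
      · exact (hdiff.continuous.add (by continuity)).continuousOn
      · exact ((hdiff.add ((differentiable_id.pow 2).const_mul c)).differentiableOn)
      · intro x hx
        rw [interior_Icc] at hx
        have hda : HasDerivAt (fun t => V t + c * t ^ 2) (deriv V x + c * (2 * x ^ 1)) x :=
          (hdiff x).hasDerivAt.add ((hasDerivAt_pow 2 x).const_mul c)
        rw [hda.deriv]
        simp only [pow_one]
        have habs := hlip x ⟨hx.1.le, hx.2.le⟩
        have h2 : -(c * x) ≤ deriv V x := (abs_le.mp habs).1.trans_eq' (by ring_nf)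
        nlinarith [hx.1]
    intro t ht
    have h := hg (Set.left_mem_Icc.mpr one_pos.le) ht ht.1
    simp only [h0, zero_add] at h
    nlinarith [h]
  have hs2 : (0:ℝ) < Real.sqrt 2 := Real.sqrt_pos.mpr two_pos
  -- pointwise comparison
  have key : ∀ E : ℝ, 0 < E → ∀ γ ∈ Set.Icc (0:ℝ) 1,
      (Real.sqrt 2)⁻¹ * (Real.sqrt E + Real.sqrt c * γ)⁻¹ ≤
        1 / Real.sqrt (2 * (E - V γ)) := by
    intro E hE γ hγ
    have hsE : 0 < Real.sqrt E := Real.sqrt_pos.mpr hE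
    have hsEsq : Real.sqrt E ^ 2 = E := Real.sq_sqrt hE.le
    have hden : 0 < Real.sqrt E + Real.sqrt c * γ :=
      add_pos_of_pos_of_nonneg hsE (mul_nonneg hsc.le hγ.1)
    have hle : Real.sqrt (2 * (E - V γ)) ≤ Real.sqrt 2 * (Real.sqrt E + Real.sqrt c * γ) := by
      have h2 : 2 * (E - V γ) ≤ (Real.sqrt 2 * (Real.sqrt E + Real.sqrt c * γ)) ^ 2 := by
        have hs2sq : Real.sqrt 2 ^ 2 = 2 := Real.sq_sqrt two_pos.le
        have hVγ := hVlb γ hγ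
        have hexp : (Real.sqrt 2 * (Real.sqrt E + Real.sqrt c * γ)) ^ 2
            = 2 * E + 4 * (Real.sqrt E * (Real.sqrt c * γ)) + 2 * (c * γ ^ 2) := by
          rw [mul_pow, hs2sq, add_sq, hsEsq, mul_pow, hscsq]; ring
        rw [hexp]
        have hcross : 0 ≤ Real.sqrt E * (Real.sqrt c * γ) :=
          mul_nonneg hsE.le (mul_nonneg hsc.le hγ.1)
        linarith
      calc Real.sqrt (2 * (E - V γ))
          ≤ Real.sqrt ((Real.sqrt 2 * (Real.sqrt E + Real.sqrt c * γ)) ^ 2) :=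
            Real.sqrt_le_sqrt h2
        _ = Real.sqrt 2 * (Real.sqrt E + Real.sqrt c * γ) :=
            Real.sqrt_sq (by positivity)
    have hpos : 0 < Real.sqrt (2 * (E - V γ)) := by
      apply Real.sqrt_pos.mpr
      have := hVle γ
      nlinarith
    rw [← one_div, ← one_div, div_mul_div_comm, one_mul]
    exact one_div_le_one_div_of_le hpos hle
  -- the comparison integral
  have hInt : ∀ E : ℝ, 0 < E →
      (∫ γ in (0:ℝ)..1, (Real.sqrt E + Real.sqrt c * γ)⁻¹) =
        (Real.sqrt c)⁻¹ *
          (Real.log (Real.sqrt E + Real.sqrt c) - Real.log (Real.sqrt E)) := by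
    intro E hE
    have hsE : 0 < Real.sqrt E := Real.sqrt_pos.mpr hE
    have hdpos : ∀ γ : ℝ, 0 ≤ γ → 0 < Real.sqrt E + Real.sqrt c * γ := fun γ hγ =>
      add_pos_of_pos_of_nonneg hsE (mul_nonneg hsc.le hγ)
    have hcontd : Continuous fun γ : ℝ => (Real.sqrt E + Real.sqrt c * γ) := by continuity
    have hci : IntervalIntegrable (fun γ => (Real.sqrt E + Real.sqrt c * γ)⁻¹)
        MeasureTheory.volume 0 1 := by
      apply ContinuousOn.intervalIntegrable
      apply ContinuousOn.inv₀ hcontd.continuousOn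
      intro x hx
      rw [Set.uIcc_of_le zero_le_one] at hx
      exact (hdpos x hx.1).ne'
    have heval := intervalIntegral.integral_eq_sub_of_hasDerivAt
      (f := fun γ => (Real.sqrt c)⁻¹ * Real.log (Real.sqrt E + Real.sqrt c * γ))
      (f' := fun γ => (Real.sqrt E + Real.sqrt c * γ)⁻¹) (a := 0) (b := 1)
      (fun γ hγ => by
        rw [Set.uIcc_of_le zero_le_one] at hγ
        have hpos := hdpos γ hγ.1
        have h1 : HasDerivAt (fun γ : ℝ => Real.sqrt E + Real.sqrt c * γ) (Real.sqrt c) γ := by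
          simpa using ((hasDerivAt_id γ).const_mul (Real.sqrt c)).const_add (Real.sqrt E)
        have h2 := (Real.hasDerivAt_log hpos.ne').comp γ h1
        have h3 := h2.const_mul (Real.sqrt c)⁻¹
        refine h3.congr_deriv ?_
        rw [mul_comm _ (Real.sqrt c), ← mul_assoc, inv_mul_cancel₀ hsc.ne', one_mul]
      ) hci
    rw [heval]
    simp
    ring
  -- the lower-bound function
  set G : ℝ → ℝ := fun E => (Real.sqrt 2)⁻¹ * ((Real.sqrt c)⁻¹ *
    (Real.log (Real.sqrt E + Real.sqrt c) - Real.log (Real.sqrt E))) with hG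
  have hGle : ∀ E : ℝ, 0 < E →
      G E ≤ ∫ γ in (0:ℝ)..1, 1 / Real.sqrt (2 * (E - V γ)) := by
    intro E hE
    have hsE : 0 < Real.sqrt E := Real.sqrt_pos.mpr hE
    -- integrability of both sides
    have hfi : IntervalIntegrable (fun γ => 1 / Real.sqrt (2 * (E - V γ)))
        MeasureTheory.volume 0 1 := by
      apply Continuous.intervalIntegrable
      apply Continuous.div continuous_const
      · exact Real.continuous_sqrt.comp (by fun_prop)
      · intro x
        have hvx := hVle x
        exact (Real.sqrt_pos.mpr (by nlinarith)).ne'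
    have hgi : IntervalIntegrable
        (fun γ => (Real.sqrt 2)⁻¹ * (Real.sqrt E + Real.sqrt c * γ)⁻¹)
        MeasureTheory.volume 0 1 := by
      apply ContinuousOn.intervalIntegrable
      apply ContinuousOn.mul continuousOn_const
      apply ContinuousOn.inv₀ (by fun_prop)
      intro x hx
      rw [Set.uIcc_of_le zero_le_one] at hx
      exact (add_pos_of_pos_of_nonneg hsE (mul_nonneg hsc.le hx.1)).ne'
    have hmono := intervalIntegral.integral_mono_on zero_le_one hgi hfi
      (fun γ hγ => key E hE γ hγ)
    calc G E = ∫ γ in (0:ℝ)..1, (Real.sqrt 2)⁻¹ * (Real.sqrt E + Real.sqrt c * γ)⁻¹ := by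
          rw [intervalIntegral.integral_const_mul, hInt E hE]
      _ ≤ _ := hmono
  -- G → ∞ as E → 0⁺
  have hGtop : Tendsto G (nhdsWithin 0 (Set.Ioi 0)) atTop := by
    have hk : (0:ℝ) < (Real.sqrt 2)⁻¹ * (Real.sqrt c)⁻¹ := by positivity
    have h1 : Tendsto (fun E : ℝ => Real.log (Real.sqrt E + Real.sqrt c))
        (nhdsWithin 0 (Set.Ioi 0)) (nhds (Real.log (Real.sqrt c))) := by
      have hs : Tendsto (fun E : ℝ => Real.sqrt E + Real.sqrt c)
          (nhdsWithin 0 (Set.Ioi 0)) (nhds (Real.sqrt c)) := by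
        have hsq : Tendsto (fun E : ℝ => Real.sqrt E) (nhdsWithin 0 (Set.Ioi 0)) (nhds 0) := by
          have h := (Real.continuous_sqrt.tendsto 0).mono_left
            (nhdsWithin_le_nhds (s := Set.Ioi (0:ℝ)))
          simpa using h
        simpa using hsq.add_const (Real.sqrt c)
      exact (Real.continuousAt_log hsc.ne').tendsto.comp hs
    have h2 : Tendsto (fun E : ℝ => -Real.log (Real.sqrt E))
        (nhdsWithin 0 (Set.Ioi 0)) atTop := by
      have hlog : Tendsto (fun E : ℝ => Real.log (Real.sqrt E))
          (nhdsWithin 0 (Set.Ioi 0)) atBot := by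
        apply Tendsto.congr' (f₁ := fun E : ℝ => Real.log E / 2)
        · filter_upwards [self_mem_nhdsWithin] with E hE
          rw [Real.log_sqrt (le_of_lt hE)]
        · exact (Real.tendsto_log_nhdsGT_zero).atBot_div_const two_pos
      exact tendsto_neg_atBot_atTop.comp hlog
    have h3 : Tendsto (fun E : ℝ =>
        Real.log (Real.sqrt E + Real.sqrt c) - Real.log (Real.sqrt E))
        (nhdsWithin 0 (Set.Ioi 0)) atTop := by
      simpa [sub_eq_add_neg] using h1.add_atTop h2
    have := h3.const_mul_atTop hk
    apply this.congr
    intro E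
    simp [hG]
    ring
  exact tendsto_atTop_mono' _ (by
    filter_upwards [self_mem_nhdsWithin] with E hE
    exact hGle E hE) hGtop
end

section
/- Let V be C², 1-periodic, max V = 0, attaining its maximum at 0, and let C_V > 0 bound −V'' from above (i.e. V'' > −C_V). Then for every E > 0, σ(E) = ∫_0^1 1/√(2(E − V(γ))) dγ ≥ (1/√(C_V)) · arcsinh(√(C_V/(2E))). -/
open Real intervalIntegral

/-- Taylor-type lower bound: `V γ ≥ -(C_V/2) γ²` for `γ ≥ 0`. -/
lemma taylor_lb (V : ℝ → ℝ) (hV : ContDiff ℝ 2 V)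
    (hmax : IsGreatest (Set.range V) 0) (h0 : V 0 = 0)
    (C_V : ℝ) (hC : 0 < C_V) (hC' : ∀ s : ℝ, -C_V < deriv (deriv V) s) :
    ∀ γ : ℝ, 0 ≤ γ → -(C_V / 2) * γ ^ 2 ≤ V γ := by
  have hVle : ∀ x, V x ≤ 0 := fun x => hmax.2 ⟨x, rfl⟩
  have hV2 : ContDiff ℝ 2 V := hV
  have hdiffV : Differentiable ℝ V := hV.differentiable (by norm_num)
  have hV1 : ContDiff ℝ 1 (deriv V) := by
    have := (contDiff_succ_iff_deriv (n := 1)).mp (by exact_mod_cast hV)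
    exact this.2.2
  have hdiffV' : Differentiable ℝ (deriv V) := hV1.differentiable (by norm_num)
  -- deriv V 0 = 0
  have hloc : IsLocalMax V 0 :=
    Filter.Eventually.of_forall (fun x => by rw [h0]; exact hVle x)
  have hd0 : deriv V 0 = 0 := hloc.deriv_eq_zero
  -- G' x = deriv V x + C_V * x is strictly monotone
  set G' : ℝ → ℝ := fun x => deriv V x + C_V * x with hG'def
  have hG'deriv : ∀ x, HasDerivAt G' (deriv (deriv V) x + C_V) x := by
    intro x
    exact ((hdiffV' x).hasDerivAt).add (by simpa using (hasDerivAt_id x).const_mul C_V)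
  have hG'mono : StrictMono G' := by
    apply strictMono_of_deriv_pos
    intro x
    rw [(hG'deriv x).deriv]
    linarith [hC' x]
  have hG'0 : G' 0 = 0 := by simp [hG'def, hd0]
  -- g x = V x + (C_V/2) x² is monotone on [0, ∞)
  set g : ℝ → ℝ := fun x => V x + C_V / 2 * x ^ 2 with hgdef
  have hgderiv : ∀ x, HasDerivAt g (G' x) x := by
    intro x
    have h2 : HasDerivAt (fun x : ℝ => C_V / 2 * x ^ 2) (C_V * x) x := by
      have := (hasDerivAt_pow 2 x).const_mul (C_V / 2)
      convert this using 1
      · rfl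
      · rfl
      ring
    exact ((hdiffV x).hasDerivAt).add h2
  have hgmono : MonotoneOn g (Set.Ici 0) := by
    apply monotoneOn_of_deriv_nonneg (convex_Ici 0)
    · exact (hV.continuous.add (by continuity)).continuousOn
    · intro x hx
      exact (hgderiv x).differentiableAt.differentiableWithinAt
    · intro x hx
      rw [interior_Ici] at hx
      rw [(hgderiv x).deriv]
      have : G' 0 < G' x := hG'mono hx
      linarith [hG'0]
  intro γ hγ
  have := hgmono (Set.self_mem_Ici) (Set.mem_Ici.mpr hγ) hγ
  simp only [hgdef, h0] at this
  nlinarith [this]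

/-- The quantitative lower bound on `σ(E)` in terms of `arcsinh`. -/
theorem sigma_lower_bound
    (V : ℝ → ℝ) (hV : ContDiff ℝ 2 V) (hper : Function.Periodic V 1)
    (hmax : IsGreatest (Set.range V) 0) (h0 : V 0 = 0)
    (C_V : ℝ) (hC : 0 < C_V) (hC' : ∀ s : ℝ, -C_V < deriv (deriv V) s) :
    ∀ E : ℝ, 0 < E →
      (1 / Real.sqrt C_V) * Real.arsinh (Real.sqrt (C_V / (2 * E))) ≤
        ∫ γ in (0:ℝ)..1, 1 / Real.sqrt (2 * (E - V γ)) := by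
  intro E hE
  have hVle : ∀ x, V x ≤ 0 := fun x => hmax.2 ⟨x, rfl⟩
  have htay := taylor_lb V hV hmax h0 C_V hC hC'
  have h2E : (0:ℝ) < 2 * E := by linarith
  have hsC : (0:ℝ) < Real.sqrt C_V := Real.sqrt_pos.mpr hC
  have hs2E : (0:ℝ) < Real.sqrt (2 * E) := Real.sqrt_pos.mpr h2E
  set a : ℝ := Real.sqrt (C_V / (2 * E)) with hadef
  have ha : a = Real.sqrt C_V / Real.sqrt (2 * E) := by
    rw [hadef, Real.sqrt_div hC.le]
  -- the comparison integrand
  set f : ℝ → ℝ := fun γ => 1 / Real.sqrt (2 * E + C_V * γ ^ 2) with hfdef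
  have hpos : ∀ γ : ℝ, (0:ℝ) < 2 * E + C_V * γ ^ 2 := by
    intro γ; nlinarith [sq_nonneg γ]
  have hfcont : Continuous f := by
    apply Continuous.div continuous_const
    · exact (Real.continuous_sqrt.comp (by continuity))
    · intro γ
      exact ne_of_gt (Real.sqrt_pos.mpr (hpos γ))
  -- FTC: compute ∫ f = (1/√C_V) arsinh a
  set F : ℝ → ℝ := fun x => (1 / Real.sqrt C_V) * Real.arsinh (a * x) with hFdef
  have hFderiv : ∀ x : ℝ, HasDerivAt F (f x) x := by
    intro x
    have h1 : HasDerivAt (fun x : ℝ => a * x) a x := by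
      simpa using (hasDerivAt_id x).const_mul a
    have h2 : HasDerivAt Real.arsinh (Real.sqrt (1 + (a*x) ^ 2))⁻¹ (a * x) :=
      Real.hasDerivAt_arsinh (a * x)
    have h3 := (h2.comp x h1).const_mul (1 / Real.sqrt C_V)
    convert h3 using 1
    · rfl
    · rfl
    · rfl
    -- show f x = (1/√C_V) * ((√(1+(a x)²))⁻¹ * a)
    have ha2 : a ^ 2 = C_V / (2 * E) := Real.sq_sqrt (by positivity)
    have key : Real.sqrt (1 + (a * x) ^ 2)
        = Real.sqrt (2 * E + C_V * x ^ 2) / Real.sqrt (2 * E) := by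
      rw [show (1 : ℝ) + (a * x) ^ 2 = (2 * E + C_V * x ^ 2) / (2 * E) by
        rw [mul_pow, ha2]; field_simp]
      exact Real.sqrt_div (hpos x).le _
    have hsx : (0:ℝ) < Real.sqrt (2 * E + C_V * x ^ 2) := Real.sqrt_pos.mpr (hpos x)
    rw [hfdef]
    simp only [key, ha]
    field_simp
    rw [Real.sq_sqrt h2E.le, Real.sq_sqrt hC.le, mul_comm (x ^ 2) C_V,
      Real.sqrt_div (hpos x).le, mul_div_cancel₀ _ hs2E.ne']
  have hint : IntervalIntegrable f MeasureTheory.volume 0 1 :=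
    hfcont.intervalIntegrable 0 1
  have hFTC : ∫ γ in (0:ℝ)..1, f γ = F 1 - F 0 :=
    intervalIntegral.integral_eq_sub_of_hasDerivAt (fun x _ => hFderiv x) hint
  have hF0 : F 0 = 0 := by simp [hFdef]
  have hF1 : F 1 = (1 / Real.sqrt C_V) * Real.arsinh a := by simp [hFdef]
  -- comparison
  have hcont2 : ContinuousOn (fun γ => 1 / Real.sqrt (2 * (E - V γ))) (Set.uIcc 0 1) := by
    apply ContinuousOn.div continuousOn_const
    · exact (Real.continuous_sqrt.comp (by
        exact (continuous_const.mul (continuous_const.sub (hV.continuous))))).continuousOn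
    · intro γ _
      have : (0:ℝ) < 2 * (E - V γ) := by have := hVle γ; linarith
      exact ne_of_gt (Real.sqrt_pos.mpr this)
  have hint2 : IntervalIntegrable (fun γ => 1 / Real.sqrt (2 * (E - V γ)))
      MeasureTheory.volume 0 1 := hcont2.intervalIntegrable
  have hmono : ∫ γ in (0:ℝ)..1, f γ ≤ ∫ γ in (0:ℝ)..1, 1 / Real.sqrt (2 * (E - V γ)) := by
    apply intervalIntegral.integral_mono_on (by norm_num) hint hint2
    intro γ hγ
    have hγ0 : 0 ≤ γ := hγ.1
    have htγ := htay γ hγ0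
    have h1 : (0:ℝ) < 2 * (E - V γ) := by have := hVle γ; linarith
    have h2 : 2 * (E - V γ) ≤ 2 * E + C_V * γ ^ 2 := by nlinarith
    rw [hfdef]
    simp only
    apply one_div_le_one_div_of_le (Real.sqrt_pos.mpr h1)
    exact Real.sqrt_le_sqrt h2
  calc (1 / Real.sqrt C_V) * Real.arsinh a = F 1 - F 0 := by rw [hF0, hF1]; ring
    _ = ∫ γ in (0:ℝ)..1, f γ := hFTC.symm
    _ ≤ _ := hmono
end

section
/- Let V be C², 1-periodic with max V = 0 and min V < 0, and fix q_a ≠ 0 and p_a > 0 with p_a < √(−2 min V). Then for every E with 0 < E ≤ p_a²/2 there exists a sequence ε_k → 0 such that the solutions q_{ε_k} of q'' = −(1/ε_k) V'(q/ε_k) with q_{ε_k}(0) = q_a and q_{ε_k}'(0) = p_a all have total energy E, and converge uniformly on ℝ to the line q(t) = t/σ(E) + q_a. -/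
open Real intervalIntegral Filter

/-- Averaging estimate for a continuous periodic function: its primitive deviates
from the linear function with slope the mean by a globally bounded amount. -/
lemma periodic_integral_estimate (f : ℝ → ℝ) (hf : Continuous f)
    (hper : Function.Periodic f 1) :
    ∃ C : ℝ, 0 ≤ C ∧ ∀ x y : ℝ,
      |(∫ s in x..y, f s) - (∫ s in (0:ℝ)..1, f s) * (y - x)| ≤ C := by
  set σ : ℝ := ∫ s in (0:ℝ)..1, f s with hσ
  set H : ℝ → ℝ := fun x => ∫ s in (0:ℝ)..x, f s with hH
  have hHdiff : ∀ x y : ℝ, (∫ s in x..y, f s) = H y - H x := by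
    intro x y
    have := intervalIntegral.integral_add_adjacent_intervals
      (hf.intervalIntegrable (μ := MeasureTheory.volume) 0 x)
      (hf.intervalIntegrable (μ := MeasureTheory.volume) x y)
    simp only [hH]
    linarith
  set G : ℝ → ℝ := fun x => H x - σ * x with hG
  have hHder : ∀ x : ℝ, HasDerivAt H (f x) x := fun x =>
    intervalIntegral.integral_hasDerivAt_right (hf.intervalIntegrable _ _)
      hf.stronglyMeasurable.stronglyMeasurableAtFilter hf.continuousAt
  have hHcont : Continuous H :=
    continuous_iff_continuousAt.2 fun x => (hHder x).continuousAt
  have hGcont : Continuous G := (hHcont.sub (continuous_const.mul continuous_id))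
  have hGper : Function.Periodic G 1 := by
    intro x
    have h1 : (∫ s in x..x + 1, f s) = σ := by
      have := hper.intervalIntegral_add_eq x 0
      simpa [hσ] using this
    have h2 : H (x + 1) - H x = σ := by rw [← hHdiff]; exact h1
    simp only [hG]
    have : H (x + 1) = H x + σ := by linarith
    rw [this]; ring
  obtain ⟨C, hC⟩ := (isCompact_Icc (a := (0:ℝ)) (b := 1)).exists_bound_of_continuousOn
    hGcont.continuousOn
  have hCnn : 0 ≤ C := le_trans (norm_nonneg (G 0)) (hC 0 (by norm_num))
  have hGbound : ∀ x : ℝ, |G x| ≤ C := by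
    intro x
    have hfr : Int.fract x ∈ Set.Icc (0:ℝ) 1 :=
      ⟨Int.fract_nonneg x, (Int.fract_lt_one x).le⟩
    have hxeq : G (Int.fract x) = G x := by
      have := hGper.sub_int_mul_eq (x := x) (n := ⌊x⌋)
      rw [mul_one] at this
      rw [← Int.self_sub_floor]
      exact this
    calc |G x| = |G (Int.fract x)| := by rw [hxeq]
      _ = ‖G (Int.fract x)‖ := (Real.norm_eq_abs _).symm
      _ ≤ C := hC _ hfr
  refine ⟨2 * C, by linarith, fun x y => ?_⟩
  have hexp : (∫ s in x..y, f s) - σ * (y - x) = G y - G x := by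
    rw [hHdiff x y]; simp only [hG]; ring
  rw [hexp]
  calc |G y - G x| ≤ |G y| + |G x| := abs_sub _ _
    _ ≤ C + C := add_le_add (hGbound y) (hGbound x)
    _ = 2 * C := by ring

/-- Theorem 2.4 (construction part): for fixed initial velocity `p_a`, for every
    admissible energy `E ∈ (0, p_a²/2]` there is a sequence `ε_k → 0` along which all
    solutions of the initial value problem have energy `E` and converge uniformly to
    the line `t ↦ t/σ(E) + q_a`. -/
theorem ivp_fixed_velocity_family_of_limits
    (V : ℝ → ℝ) (hV : ContDiff ℝ 2 V) (hper : Function.Periodic V 1)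
    (hmax : IsGreatest (Set.range V) 0)
    (Vmin : ℝ) (hmin : IsLeast (Set.range V) Vmin) (hminneg : Vmin < 0)
    (q_a p_a : ℝ) (hqa : q_a ≠ 0) (hpa : 0 < p_a)
    (hpa2 : p_a < Real.sqrt (-2 * Vmin)) :
    ∀ E : ℝ, 0 < E → E ≤ p_a ^ 2 / 2 →
      ∃ εk : ℕ → ℝ, (∀ k, 0 < εk k) ∧ Tendsto εk atTop (nhds 0) ∧
        ∀ q q' : ℕ → ℝ → ℝ,
          (∀ k t, HasDerivAt (q k) (q' k t) t) →
          (∀ k t, HasDerivAt (q' k) (-(1 / εk k) * deriv V (q k t / εk k)) t) →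
          (∀ k, q k 0 = q_a) → (∀ k, q' k 0 = p_a) →
          (∀ k t, (1 / 2) * (q' k t) ^ 2 + V (q k t / εk k) = E) ∧
            TendstoUniformly (fun k t => q k t)
              (fun t => t / (∫ γ in (0:ℝ)..1, 1 / Real.sqrt (2 * (E - V γ))) + q_a)
              atTop := by
  intro E hE hE2
  have hVcont : Continuous V := hV.continuous
  have hVle : ∀ x, V x ≤ 0 := fun x => hmax.2 ⟨x, rfl⟩
  have hVd : Differentiable ℝ V := hV.differentiable (by norm_num)
  have hpos : ∀ s, 0 < 2 * (E - V s) := fun s => by nlinarith [hVle s]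
  -- the periodic integrand
  set f : ℝ → ℝ := fun s => 1 / Real.sqrt (2 * (E - V s)) with hf
  have hsqrtpos : ∀ s, 0 < Real.sqrt (2 * (E - V s)) :=
    fun s => Real.sqrt_pos.2 (hpos s)
  have hfpos : ∀ s, 0 < f s := fun s => div_pos one_pos (hsqrtpos s)
  have hfcont : Continuous f := by
    apply continuous_const.div
    · exact (Real.continuous_sqrt.comp (by continuity))
    · exact fun s => (hsqrtpos s).ne'
  have hfper : Function.Periodic f 1 := by
    intro x; simp only [hf, hper x]
  set σ : ℝ := ∫ γ in (0:ℝ)..1, f γ with hσ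
  have hσpos : 0 < σ :=
    intervalIntegral.intervalIntegral_pos_of_pos (hfcont.intervalIntegrable 0 1)
      hfpos one_pos
  -- averaging estimate
  obtain ⟨C, hCnn, hCbound⟩ := periodic_integral_estimate f hfcont hfper
  -- scaled estimate
  have key : ∀ ε : ℝ, 0 < ε → ∀ x y : ℝ,
      |(∫ s in x..y, f (s / ε)) - σ * (y - x)| ≤ C * ε := by
    intro ε hε x y
    rw [intervalIntegral.integral_comp_div f hε.ne']
    have h1 := hCbound (x / ε) (y / ε)
    have hxy : ε * (σ * (y / ε - x / ε)) = σ * (y - x) := by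
      field_simp
    calc |ε • (∫ s in x/ε..y/ε, f s) - σ * (y - x)|
        = |ε * ((∫ s in x/ε..y/ε, f s) - σ * (y / ε - x / ε))| := by
          rw [smul_eq_mul]
          congr 1
          field_simp
      _ = ε * |(∫ s in x/ε..y/ε, f s) - σ * (y / ε - x / ε)| := by
          rw [abs_mul, abs_of_pos hε]
      _ ≤ ε * C := by
          exact mul_le_mul_of_nonneg_left h1 hε.le
      _ = C * ε := by ring
  -- find x0 with V x0 = E - p_a^2/2
  obtain ⟨a, ha⟩ := hmin.1
  obtain ⟨b, hb⟩ := hmax.1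
  have hpa2' : p_a ^ 2 < -2 * Vmin := (Real.lt_sqrt hpa.le).1 hpa2
  have hmem : E - p_a ^ 2 / 2 ∈ Set.uIcc (V a) (V b) := by
    rw [ha, hb]
    exact Set.mem_uIcc.2 (Or.inl ⟨by nlinarith, by linarith⟩)
  obtain ⟨x0, _, hx0⟩ := intermediate_value_uIcc (hVcont.continuousOn (s := Set.uIcc a b)) hmem
  -- construct the sequence c k with V (c k) = E - p_a^2/2, q_a / c k > 0, |c k| ≥ k+1
  obtain ⟨c, hcV, hcpos, hcne, hcbig⟩ : ∃ c : ℕ → ℝ,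
      (∀ k, V (c k) = E - p_a ^ 2 / 2) ∧ (∀ k, 0 < q_a / c k) ∧ (∀ k, c k ≠ 0) ∧
      (∀ k : ℕ, (k : ℝ) + 1 ≤ |c k|) := by
    have hx0abs : x0 ≤ |x0| := le_abs_self x0
    have hx0abs' : -|x0| ≤ x0 := neg_abs_le x0
    have hceil : |x0| ≤ (⌈|x0|⌉₊ : ℝ) := Nat.le_ceil _
    rcases hqa.lt_or_gt with hq | hq
    · -- q_a < 0 : take c k = x0 - (⌈|x0|⌉₊ + 1 + k)
      refine ⟨fun k => x0 - ((⌈|x0|⌉₊ + 1 + k : ℕ) : ℝ), fun k => ?_, fun k => ?_, fun k => ?_,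
        fun k => ?_⟩
      · have := hper.sub_nat_mul_eq (x := x0) (n := ⌈|x0|⌉₊ + 1 + k)
        rw [mul_one] at this
        rw [this, hx0]
      · have hneg : x0 - ((⌈|x0|⌉₊ + 1 + k : ℕ) : ℝ) < 0 := by
          push_cast; linarith
        exact div_pos_of_neg_of_neg hq hneg
      · have : x0 - ((⌈|x0|⌉₊ + 1 + k : ℕ) : ℝ) < 0 := by push_cast; linarith
        exact this.ne
      · have hneg : x0 - ((⌈|x0|⌉₊ + 1 + k : ℕ) : ℝ) ≤ -((k : ℝ) + 1) := by
          push_cast; linarith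
        calc (k : ℝ) + 1 ≤ -(x0 - ((⌈|x0|⌉₊ + 1 + k : ℕ) : ℝ)) := by linarith
          _ ≤ |x0 - ((⌈|x0|⌉₊ + 1 + k : ℕ) : ℝ)| := neg_le_abs _
    · -- 0 < q_a : take c k = x0 + (⌈|x0|⌉₊ + 1 + k)
      refine ⟨fun k => x0 + ((⌈|x0|⌉₊ + 1 + k : ℕ) : ℝ), fun k => ?_, fun k => ?_, fun k => ?_,
        fun k => ?_⟩
      · have := (hper.nat_mul (⌈|x0|⌉₊ + 1 + k)) x0
        rw [mul_one] at this
        rw [this, hx0]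
      · have hposc : 0 < x0 + ((⌈|x0|⌉₊ + 1 + k : ℕ) : ℝ) := by push_cast; linarith
        exact div_pos hq hposc
      · have : 0 < x0 + ((⌈|x0|⌉₊ + 1 + k : ℕ) : ℝ) := by push_cast; linarith
        exact this.ne'
      · have hge : (k : ℝ) + 1 ≤ x0 + ((⌈|x0|⌉₊ + 1 + k : ℕ) : ℝ) := by push_cast; linarith
        exact hge.trans (le_abs_self _)
  set εk : ℕ → ℝ := fun k => q_a / c k with hεk
  have hεpos : ∀ k, 0 < εk k := hcpos
  have hεne : ∀ k, εk k ≠ 0 := fun k => (hεpos k).ne'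
  have hqac : ∀ k, q_a / εk k = c k := by
    intro k
    show q_a / (q_a / c k) = c k
    exact div_div_cancel₀ hqa
  have hεtend : Tendsto εk atTop (nhds 0) := by
    refine squeeze_zero_norm (f := εk) (a := fun k : ℕ => |q_a| * (1 / ((k : ℝ) + 1)))
      (fun k => ?_) ?_
    · have hck : (0:ℝ) < (k : ℝ) + 1 := by positivity
      rw [Real.norm_eq_abs, hεk, abs_div]
      rw [div_le_iff₀ (lt_of_lt_of_le hck (hcbig k))]
      calc |q_a| = |q_a| * (1 / ((k:ℝ)+1)) * ((k:ℝ)+1) := by field_simp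
        _ ≤ |q_a| * (1 / ((k:ℝ)+1)) * |c k| := by
            apply mul_le_mul_of_nonneg_left (hcbig k)
            positivity
    · simpa using tendsto_one_div_add_atTop_nhds_zero_nat.const_mul |q_a|
  refine ⟨εk, hεpos, hεtend, ?_⟩
  intro q q' hq hq'' hq0 hq'0
  -- energy conservation
  have henergy : ∀ k t, (1 / 2) * (q' k t) ^ 2 + V (q k t / εk k) = E := by
    intro k t
    set Efun : ℝ → ℝ := fun t => (1 / 2) * (q' k t) ^ 2 + V (q k t / εk k) with hEfun
    have hEder : ∀ s, HasDerivAt Efun 0 s := by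
      intro s
      have h1 : HasDerivAt (fun u => (1 / 2) * (q' k u) ^ 2)
          ((1 / 2) * (2 * q' k s ^ 1 * (-(1 / εk k) * deriv V (q k s / εk k)))) s :=
        ((hq'' k s).pow 2).const_mul (1 / 2)
      have hinner : HasDerivAt (fun u => q k u / εk k) (q' k s / εk k) s :=
        (hq k s).div_const (εk k)
      have houter : HasDerivAt V (deriv V (q k s / εk k)) (q k s / εk k) :=
        (hVd _).hasDerivAt
      have h2 : HasDerivAt (fun u => V (q k u / εk k))
          (deriv V (q k s / εk k) * (q' k s / εk k)) s := houter.comp s hinner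
      have := h1.add h2
      refine this.congr_deriv ?_
      ring
    have hEdiff : Differentiable ℝ Efun := fun s => (hEder s).differentiableAt
    have hconst : Efun t = Efun 0 :=
      is_const_of_deriv_eq_zero hEdiff (fun s => (hEder s).deriv) t 0
    have h0 : Efun 0 = E := by
      simp only [hEfun, hq0 k, hq'0 k, hqac k, hcV k]
      ring
    show Efun t = E
    rw [hconst, h0]
  refine ⟨henergy, ?_⟩
  -- positivity of q'
  have hq'cont : ∀ k, Continuous (q' k) :=
    fun k => continuous_iff_continuousAt.2 fun t => (hq'' k t).continuousAt
  have hsq : ∀ k t, (q' k t) ^ 2 = 2 * (E - V (q k t / εk k)) := by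
    intro k t; have := henergy k t; linarith
  have hq'ne : ∀ k t, q' k t ≠ 0 := by
    intro k t h
    have h1 := hsq k t
    rw [h] at h1
    have := hpos (q k t / εk k)
    nlinarith
  have hq'pos : ∀ k t, 0 < q' k t := by
    intro k t
    by_contra h
    push_neg at h
    have hlt : q' k t < 0 := lt_of_le_of_ne h (hq'ne k t)
    have hmem0 : (0:ℝ) ∈ Set.uIcc (q' k t) (q' k 0) := by
      rw [hq'0 k]
      exact Set.mem_uIcc.2 (Or.inl ⟨hlt.le, hpa.le⟩)
    obtain ⟨s, _, hs⟩ := intermediate_value_uIcc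
      ((hq'cont k).continuousOn (s := Set.uIcc t 0)) hmem0
    exact hq'ne k s hs
  have hq'eq : ∀ k t, q' k t = Real.sqrt (2 * (E - V (q k t / εk k))) := by
    intro k t
    rw [← hsq k t, Real.sqrt_sq (hq'pos k t).le]
  -- the key identity Φ (q k t) = t
  have hΦ : ∀ k t, (∫ s in q_a..(q k t), f (s / εk k)) = t := by
    intro k t
    set g : ℝ → ℝ := fun s => f (s / εk k) with hg
    have hgcont : Continuous g := hfcont.comp (continuous_id.div_const (εk k))
    have hΦder : ∀ y : ℝ, HasDerivAt (fun y => ∫ s in q_a..y, g s) (g y) y := fun y =>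
      intervalIntegral.integral_hasDerivAt_right (hgcont.intervalIntegrable _ _)
        hgcont.stronglyMeasurable.stronglyMeasurableAtFilter hgcont.continuousAt
    set Ψ : ℝ → ℝ := fun u => (∫ s in q_a..(q k u), g s) - u with hΨ
    have hΨder : ∀ u, HasDerivAt Ψ 0 u := by
      intro u
      have hcomp : HasDerivAt (fun u => ∫ s in q_a..(q k u), g s)
          (g (q k u) * q' k u) u := (hΦder (q k u)).comp u (hq k u)
      have hval : g (q k u) * q' k u = 1 := by
        rw [hg]
        simp only [hf]
        rw [hq'eq k u]
        rw [one_div, inv_mul_cancel₀ (hsqrtpos _).ne']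
      rw [hval] at hcomp
      have := hcomp.sub (hasDerivAt_id u)
      exact this.congr_deriv (sub_self 1)
    have hΨdiff : Differentiable ℝ Ψ := fun u => (hΨder u).differentiableAt
    have hconst : Ψ t = Ψ 0 :=
      is_const_of_deriv_eq_zero hΨdiff (fun s => (hΨder s).deriv) t 0
    have h0 : Ψ 0 = 0 := by
      simp [hΨ, hq0 k]
    have : Ψ t = 0 := by rw [hconst, h0]
    have := this
    simp only [hΨ] at this
    linarith
  -- uniform bound
  have hbound : ∀ k t, |q k t - (t / σ + q_a)| ≤ C * εk k / σ := by
    intro k t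
    have h1 := key (εk k) (hεpos k) q_a (q k t)
    rw [hΦ k t] at h1
    have h2 : q k t - (t / σ + q_a) = -((t - σ * (q k t - q_a)) / σ) := by
      field_simp
      ring
    rw [h2, abs_neg, abs_div, abs_of_pos hσpos]
    exact (div_le_div_iff_of_pos_right hσpos).2 h1
  -- uniform convergence
  rw [Metric.tendstoUniformly_iff]
  intro δ hδ
  have htend : Tendsto (fun k => C * εk k / σ) atTop (nhds 0) := by
    have := (hεtend.const_mul C).div_const σ
    simpa using this
  filter_upwards [htend.eventually_lt_const hδ] with k hk t
  have := hbound k t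
  rw [Real.dist_eq]
  calc |t / σ + q_a - q k t| = |q k t - (t / σ + q_a)| := abs_sub_comm _ _
    _ ≤ C * εk k / σ := hbound k t
    _ < δ := hk
end

section
/- Fix E > 0, q_a < q_b, and let V be C², 1-periodic, max V = 0. For ε > 0 let q_ε solve q'' = −(1/ε)V'(q/ε) with q_ε(0) = q_a, energy E, and positive velocity, and let T_ε be the unique time with q_ε(T_ε) = q_b. Then T_ε → σ(E)(q_b − q_a) as ε → 0, where σ(E) = ∫_0^1 1/√(2(E − V(γ))) dγ. -/
open Real intervalIntegral Filter

/-- Theorem 2.5 / Corollary 2.6 (fixed-energy boundary value problem): the arrival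
    times `T_ε` with `q_ε(T_ε) = q_b` converge to `σ(E)(q_b − q_a)` as `ε → 0⁺`. -/
theorem bvp_fixed_energy_arrival_time
    (V : ℝ → ℝ) (hV : ContDiff ℝ 2 V) (hper : Function.Periodic V 1)
    (hmax : IsGreatest (Set.range V) 0)
    (E q_a q_b : ℝ) (hE : 0 < E) (hab : q_a < q_b)
    (q q' : ℝ → ℝ → ℝ) (T : ℝ → ℝ)
    (hq : ∀ ε > (0:ℝ), ∀ t, HasDerivAt (q ε) (q' ε t) t)
    (hODE : ∀ ε > (0:ℝ), ∀ t, HasDerivAt (q' ε) (-(1 / ε) * deriv V (q ε t / ε)) t)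
    (h0 : ∀ ε > (0:ℝ), q ε 0 = q_a)
    (hpos : ∀ ε > (0:ℝ), ∀ t, 0 < q' ε t)
    (henergy : ∀ ε > (0:ℝ), ∀ t, (1 / 2) * (q' ε t) ^ 2 + V (q ε t / ε) = E)
    (hT : ∀ ε > (0:ℝ), q ε (T ε) = q_b) :
    Tendsto T (nhdsWithin 0 (Set.Ioi 0))
      (nhds ((∫ γ in (0:ℝ)..1, 1 / Real.sqrt (2 * (E - V γ))) * (q_b - q_a))) := by
  set h : ℝ → ℝ := fun u => 1 / Real.sqrt (2 * (E - V u)) with hh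
  have hVle : ∀ x, V x ≤ 0 := fun x => hmax.2 ⟨x, rfl⟩
  have hEV : ∀ x, 0 < 2 * (E - V x) := fun x => by nlinarith [hVle x]
  have hVcont : Continuous V := hV.continuous
  have hsq_pos : ∀ x, 0 < Real.sqrt (2 * (E - V x)) :=
    fun x => Real.sqrt_pos.2 (hEV x)
  have hcts : Continuous h := by
    apply continuous_const.div
    · exact Real.continuous_sqrt.comp (by fun_prop)
    · exact fun x => (hsq_pos x).ne'
  have hhper : Function.Periodic h 1 := fun x => by simp only [hh, hper x]
  have hCpos : 0 < 1 / Real.sqrt (2 * E) := by positivity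
  have hbound : ∀ u, h u ≤ 1 / Real.sqrt (2 * E) := by
    intro u
    apply one_div_le_one_div_of_le (Real.sqrt_pos.2 (by linarith))
    exact Real.sqrt_le_sqrt (by nlinarith [hVle u])
  have hpos' : ∀ u, 0 < h u := fun u => div_pos one_pos (hsq_pos u)
  have hint : ∀ a b : ℝ, IntervalIntegrable h MeasureTheory.volume a b :=
    fun a b => hcts.intervalIntegrable a b
  set σ : ℝ := ∫ γ in (0:ℝ)..1, h γ with hσ
  have hσ_le : σ ≤ 1 / Real.sqrt (2 * E) := by
    calc σ ≤ ∫ _γ in (0:ℝ)..1, 1 / Real.sqrt (2 * E) :=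
          intervalIntegral.integral_mono_on zero_le_one (hint 0 1)
            intervalIntegrable_const (fun x _ => hbound x)
      _ = 1 / Real.sqrt (2 * E) := by simp
  have hσ_nonneg : 0 ≤ σ :=
    intervalIntegral.integral_nonneg zero_le_one (fun x _ => (hpos' x).le)
  -- Key identity: T ε = ε * ∫_{q_a/ε}^{q_b/ε} h
  have key : ∀ ε > (0:ℝ), T ε = ε * ∫ u in (q_a / ε)..(q_b / ε), h u := by
    intro ε hε
    have hspeed : ∀ t, q' ε t = Real.sqrt (2 * (E - V (q ε t / ε))) := by
      intro t
      have h1 : 2 * (E - V (q ε t / ε)) = (q' ε t) ^ 2 := by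
        have := henergy ε hε t; linarith
      rw [h1, Real.sqrt_sq (hpos ε hε t).le]
    set g : ℝ → ℝ := fun γ => h (γ / ε) with hg
    have hgc : Continuous g := hcts.comp (continuous_id.div_const ε)
    set F : ℝ → ℝ := fun t => ∫ γ in q_a..(q ε t), g γ with hF
    have hFd : ∀ t, HasDerivAt F 1 t := by
      intro t
      have h2 : HasDerivAt (fun x => ∫ γ in q_a..x, g γ) (g (q ε t)) (q ε t) :=
        intervalIntegral.integral_hasDerivAt_right (hgc.intervalIntegrable _ _)
          (hgc.stronglyMeasurable.stronglyMeasurableAtFilter) hgc.continuousAt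
      have h3 := h2.comp t (hq ε hε t)
      have h4 : g (q ε t) = 1 / q' ε t := by
        rw [hg]; simp only [hh]; rw [hspeed t]
      have h5 : g (q ε t) * q' ε t = 1 := by
        rw [h4, one_div, inv_mul_cancel₀ (hpos ε hε t).ne']
      rw [h5] at h3; exact h3
    have hconst : ∀ t, F t - t = F 0 - 0 := by
      have hd : ∀ x, HasDerivAt (fun s => F s - s) 0 x := fun x => by
        have h6 := (hFd x).sub (hasDerivAt_id x); simp only [sub_self] at h6; exact h6
      intro t
      exact is_const_of_deriv_eq_zero (fun x => (hd x).differentiableAt)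
        (fun x => (hd x).deriv) t 0
    have hF0 : F 0 = 0 := by simp [hF, h0 ε hε]
    have hFT : F (T ε) = T ε := by have := hconst (T ε); rw [hF0] at this; linarith
    have hval : (∫ γ in q_a..q_b, h (γ / ε)) = T ε := by
      rw [← hFT]; simp only [hF, hg, hT ε hε]
    rw [← hval, intervalIntegral.integral_comp_div (f := h) (c := ε) hε.ne', smul_eq_mul]
  -- Periodic averaging estimate
  have est : ∀ a b : ℝ, a ≤ b →
      |(∫ u in a..b, h u) - (b - a) * σ| ≤ 2 * (1 / Real.sqrt (2 * E)) := by
    intro a b hle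
    set n : ℤ := ⌊b - a⌋ with hn
    have hn0 : (0:ℤ) ≤ n := Int.le_floor.2 (by simpa using hle)
    have hfl : (n:ℝ) ≤ b - a := Int.floor_le _
    have hfu : b - a < n + 1 := Int.lt_floor_add_one _
    have hsplit : (∫ u in a..b, h u) =
        (∫ u in a..(a + n • (1:ℝ)), h u) + ∫ u in (a + n • (1:ℝ))..b, h u :=
      (intervalIntegral.integral_add_adjacent_intervals (hint _ _) (hint _ _)).symm
    have hper1 : (∫ u in a..(a + n • (1:ℝ)), h u) = (n:ℝ) * σ := by
      rw [hhper.intervalIntegral_add_zsmul_eq n a hint]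
      rw [hhper.intervalIntegral_add_eq a 0]
      simp [hσ, zsmul_eq_mul]
    have hrem : |∫ u in (a + n • (1:ℝ))..b, h u| ≤ 1 / Real.sqrt (2 * E) := by
      have h1 : |∫ u in (a + n • (1:ℝ))..b, h u| ≤
          (1 / Real.sqrt (2 * E)) * |b - (a + n • (1:ℝ))| :=
        intervalIntegral.norm_integral_le_of_norm_le_const
          (fun x _ => by rw [Real.norm_eq_abs, abs_of_pos (hpos' x)]; exact hbound x)
      have h2 : |b - (a + n • (1:ℝ))| ≤ 1 := by
        rw [zsmul_eq_mul, mul_one, abs_le]; constructor <;> [linarith; linarith]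
      calc |∫ u in (a + n • (1:ℝ))..b, h u| ≤ (1 / Real.sqrt (2 * E)) * |b - (a + n • (1:ℝ))| := h1
        _ ≤ (1 / Real.sqrt (2 * E)) * 1 := by
            exact mul_le_mul_of_nonneg_left h2 hCpos.le
        _ = 1 / Real.sqrt (2 * E) := mul_one _
    have hσrem : |(b - a - n) * σ| ≤ 1 / Real.sqrt (2 * E) := by
      rw [abs_mul, abs_of_nonneg (by linarith : (0:ℝ) ≤ b - a - n), abs_of_nonneg hσ_nonneg]
      calc (b - a - n) * σ ≤ 1 * (1 / Real.sqrt (2 * E)) := by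
            apply mul_le_mul (by linarith) hσ_le hσ_nonneg zero_le_one
        _ = 1 / Real.sqrt (2 * E) := one_mul _
    have expand : (∫ u in a..b, h u) - (b - a) * σ =
        (∫ u in (a + n • (1:ℝ))..b, h u) - (b - a - n) * σ := by
      rw [hsplit, hper1]; ring
    rw [expand]
    calc |(∫ u in (a + n • (1:ℝ))..b, h u) - (b - a - n) * σ|
        ≤ |∫ u in (a + n • (1:ℝ))..b, h u| + |(b - a - n) * σ| := abs_sub _ _
      _ ≤ 2 * (1 / Real.sqrt (2 * E)) := by linarith
  -- Conclusion
  have hbd : ∀ ε ∈ Set.Ioi (0:ℝ), ‖T ε - σ * (q_b - q_a)‖ ≤ (2 * (1 / Real.sqrt (2 * E))) * ε := by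
    intro ε hε
    have hε' : (0:ℝ) < ε := hε
    rw [key ε hε']
    have hab' := hab.le
    have hle : q_a / ε ≤ q_b / ε := by gcongr
    have hest := est (q_a / ε) (q_b / ε) hle
    have hid : ε * ((q_b / ε - q_a / ε) * σ) = σ * (q_b - q_a) := by
      field_simp
    have : ε * (∫ u in (q_a / ε)..(q_b / ε), h u) - σ * (q_b - q_a) =
        ε * ((∫ u in (q_a / ε)..(q_b / ε), h u) - (q_b / ε - q_a / ε) * σ) := by
      linear_combination hid
    rw [Real.norm_eq_abs, this, abs_mul, abs_of_pos hε', mul_comm]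
    exact mul_le_mul_of_nonneg_right hest hε'.le
  have htend0 : Tendsto (fun ε => T ε - σ * (q_b - q_a)) (nhdsWithin 0 (Set.Ioi 0)) (nhds 0) := by
    apply squeeze_zero_norm' (a := fun ε => (2 * (1 / Real.sqrt (2 * E))) * ε)
    · exact eventually_mem_nhdsWithin.mono hbd
    · have : Tendsto (fun ε : ℝ => (2 * (1 / Real.sqrt (2 * E))) * ε) (nhds 0)
          (nhds ((2 * (1 / Real.sqrt (2 * E))) * 0)) :=
        (continuous_const.mul continuous_id).tendsto 0
      simpa using this.mono_left nhdsWithin_le_nhds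
  have := htend0.add_const (σ * (q_b - q_a))
  simpa using this
end

section
/- Fix T > 0, q_a < q_b, V C² 1-periodic with max V = 0. Let E_ε > 0 satisfy ∫_{q_a}^{q_b} 1/√(2(E_ε − V(s/ε))) ds = T for each ε > 0. Then the family {E_ε} is bounded and bounded away from 0 along any sequence ε → 0; in particular every sequence ε_n → 0 has a subsequence along which E_ε converges to some Ē > 0. -/
open Real intervalIntegral Filter Set

/-- Quadratic upper bound on `-V` near an interior maximum of a `C²` function. -/
lemma quad_bound_aux (V : ℝ → ℝ) (hV : ContDiff ℝ 2 V) (hle : ∀ x, V x ≤ 0)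
    (x0 : ℝ) (hx0 : V x0 = 0) :
    ∃ c : ℝ, 0 ≤ c ∧ ∀ x ∈ Set.Icc x0 (x0 + 1), -(c * (x - x0) ^ 2) ≤ V x := by
  have hV2 : ContDiff ℝ (1 + 1) V := by
    exact_mod_cast hV
  rw [contDiff_succ_iff_deriv] at hV2
  obtain ⟨hD1, -, hV1⟩ := hV2
  rw [contDiff_one_iff_deriv] at hV1
  obtain ⟨hD2, hC2⟩ := hV1
  obtain ⟨C, hC⟩ := (isCompact_Icc (a := x0 - 1) (b := x0 + 1)).exists_bound_of_continuousOn
    hC2.continuousOn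
  set c := max C 0 with hc
  refine ⟨c, le_max_right _ _, ?_⟩
  have hd0 : deriv V x0 = 0 := by
    refine IsLocalMax.deriv_eq_zero ?_
    exact Filter.Eventually.of_forall fun y => by rw [hx0]; exact hle y
  have hmem : x0 ∈ Set.Icc (x0 - 1) (x0 + 1) := by
    constructor <;> linarith
  have hstep1 : ∀ t ∈ Set.Icc (x0 - 1) (x0 + 1), |deriv V t| ≤ c * |t - x0| := by
    intro t ht
    have := Convex.norm_image_sub_le_of_norm_deriv_le (f := deriv V) (C := c)
      (fun x _ => hD2 x) (fun x hx => le_trans (hC x hx) (le_max_left _ _))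
      (convex_Icc _ _) hmem ht
    simpa [hd0, Real.norm_eq_abs] using this
  intro x hx
  have hx0x : x0 ≤ x := hx.1
  have hsub : Set.Icc x0 x ⊆ Set.Icc (x0 - 1) (x0 + 1) := by
    intro t ht; exact ⟨by linarith [ht.1], by linarith [ht.2, hx.2]⟩
  have hstep2 : |V x - V x0| ≤ (c * (x - x0)) * |x - x0| := by
    refine Convex.norm_image_sub_le_of_norm_deriv_le (f := V) (C := c * (x - x0))
      (fun t _ => hD1 t) ?_ (convex_Icc x0 x) ⟨le_refl x0, hx0x⟩ ⟨hx0x, le_refl x⟩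
    intro t ht
    refine le_trans (hstep1 t (hsub ht)) ?_
    have : |t - x0| ≤ x - x0 := by
      rw [abs_of_nonneg (by linarith [ht.1])]; linarith [ht.2]
    have hc0 : 0 ≤ c := le_max_right _ _
    nlinarith [abs_nonneg (t - x0)]
  rw [hx0, sub_zero, abs_of_nonneg (by linarith : (0:ℝ) ≤ x - x0)] at hstep2
  have := (abs_le.1 hstep2).1
  nlinarith [this]


/-- Logarithmic blow-up of the period integral as `E → 0⁺`. -/
lemma sigma_lower_aux (V : ℝ → ℝ) (hVc : Continuous V) (hle : ∀ x, V x ≤ 0)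
    (x0 c : ℝ) (hc : 0 ≤ c)
    (hquad : ∀ x ∈ Set.Icc x0 (x0 + 1), -(c * (x - x0) ^ 2) ≤ V x)
    (E : ℝ) (hE : 0 < E) (hE1 : E ≤ 1) :
    Real.log (1 / Real.sqrt E) / Real.sqrt (2 * (1 + c)) ≤
      ∫ x in x0..x0 + 1, 1 / Real.sqrt (2 * (E - V x)) := by
  set f : ℝ → ℝ := fun x => 1 / Real.sqrt (2 * (E - V x)) with hf
  set K : ℝ := Real.sqrt (2 * (1 + c)) with hK
  have hKpos : 0 < K := Real.sqrt_pos.2 (by linarith)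
  have hfpos : ∀ x, 0 < f x := by
    intro x
    have : 0 < 2 * (E - V x) := by have := hle x; linarith
    positivity
  have hfc : Continuous f := by
    apply Continuous.div continuous_const
    · exact (Real.continuous_sqrt.comp (by fun_prop))
    · intro x
      have : 0 < 2 * (E - V x) := by have := hle x; linarith
      positivity
  set r : ℝ := Real.sqrt E with hr
  have hrpos : 0 < r := Real.sqrt_pos.2 hE
  have hr1 : r ≤ 1 := by
    rw [hr, show (1:ℝ) = Real.sqrt 1 by simp]
    exact Real.sqrt_le_sqrt hE1
  have key : ∀ x ∈ Set.Icc (x0 + r) (x0 + 1), K⁻¹ * (x - x0)⁻¹ ≤ f x := by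
    intro x hx
    have hu1 : r ≤ x - x0 := by linarith [hx.1]
    have hu2 : x - x0 ≤ 1 := by linarith [hx.2]
    have hupos : 0 < x - x0 := lt_of_lt_of_le hrpos hu1
    have hEu : E ≤ (x - x0) ^ 2 := by
      have : r ^ 2 ≤ (x - x0) ^ 2 := by nlinarith
      rwa [hr, Real.sq_sqrt hE.le] at this
    have hVx : -(c * (x - x0) ^ 2) ≤ V x := hquad x ⟨by linarith [hx.1], hx.2⟩
    have h1 : 2 * (E - V x) ≤ 2 * (1 + c) * (x - x0) ^ 2 := by nlinarith
    have h2 : Real.sqrt (2 * (E - V x)) ≤ K * (x - x0) := by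
      have : Real.sqrt (2 * (E - V x)) ≤ Real.sqrt (2 * (1 + c) * (x - x0) ^ 2) :=
        Real.sqrt_le_sqrt h1
      rwa [Real.sqrt_mul (by linarith) ((x - x0) ^ 2), Real.sqrt_sq hupos.le] at this
    have hpos : 0 < Real.sqrt (2 * (E - V x)) := by
      have : 0 < 2 * (E - V x) := by have := hle x; linarith
      positivity
    calc K⁻¹ * (x - x0)⁻¹ = 1 / (K * (x - x0)) := by
          rw [one_div, mul_inv]
      _ ≤ 1 / Real.sqrt (2 * (E - V x)) := one_div_le_one_div_of_le hpos h2
  have hle12 : x0 + r ≤ x0 + 1 := by linarith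
  have hint2 : IntervalIntegrable (fun x => K⁻¹ * (x - x0)⁻¹) MeasureTheory.volume
      (x0 + r) (x0 + 1) := by
    apply ContinuousOn.intervalIntegrable
    apply ContinuousOn.mul continuousOn_const
    apply ContinuousOn.inv₀ (by fun_prop)
    intro x hx
    rw [Set.uIcc_of_le hle12] at hx
    have : 0 < x - x0 := lt_of_lt_of_le hrpos (by linarith [hx.1])
    exact this.ne'
  have hmono : ∫ x in x0 + r..x0 + 1, K⁻¹ * (x - x0)⁻¹ ≤ ∫ x in x0 + r..x0 + 1, f x :=
    intervalIntegral.integral_mono_on hle12 hint2 (hfc.intervalIntegrable _ _) key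
  have hcomp : ∫ x in x0 + r..x0 + 1, K⁻¹ * (x - x0)⁻¹ = K⁻¹ * Real.log (1 / r) := by
    rw [intervalIntegral.integral_const_mul]
    congr 1
    have := intervalIntegral.integral_comp_sub_right (a := x0 + r) (b := x0 + 1)
      (fun u => u⁻¹) x0
    simp only [add_sub_cancel_left] at this
    rw [this, integral_inv, one_div]
    · intro hmem
      rw [Set.uIcc_of_le (by linarith : r ≤ 1)] at hmem
      exact absurd hmem.1 (by linarith)
  have hsplit : (∫ x in x0..x0 + r, f x) + ∫ x in x0 + r..x0 + 1, f x
      = ∫ x in x0..x0 + 1, f x :=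
    intervalIntegral.integral_add_adjacent_intervals (hfc.intervalIntegrable _ _)
      (hfc.intervalIntegrable _ _)
  have hnn : 0 ≤ ∫ x in x0..x0 + r, f x :=
    intervalIntegral.integral_nonneg (by linarith) (fun u _ => (hfpos u).le)
  have : K⁻¹ * Real.log (1 / r) ≤ ∫ x in x0..x0 + 1, f x := by
    rw [← hsplit, ← hcomp]
    linarith
  rw [div_eq_inv_mul]
  exact this

/-- Lower bound for the travel time in terms of the period integral. -/
lemma time_ge_aux (V : ℝ → ℝ) (hVc : Continuous V) (hper : Function.Periodic V 1)
    (hle : ∀ x, V x ≤ 0) (E : ℝ) (hE : 0 < E)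
    (q_a q_b ε : ℝ) (hab : q_a < q_b) (hε : 0 < ε) (hεs : ε ≤ (q_b - q_a) / 2) :
    (q_b - q_a) / 2 * (∫ x in (0:ℝ)..1, 1 / Real.sqrt (2 * (E - V x))) ≤
      ∫ s in q_a..q_b, 1 / Real.sqrt (2 * (E - V (s / ε))) := by
  set f : ℝ → ℝ := fun x => 1 / Real.sqrt (2 * (E - V x)) with hf
  have hfpos : ∀ x, 0 < f x := by
    intro x
    have : 0 < 2 * (E - V x) := by have := hle x; linarith
    positivity
  have hfc : Continuous f := by
    apply Continuous.div continuous_const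
    · exact (Real.continuous_sqrt.comp (by fun_prop))
    · intro x
      have : 0 < 2 * (E - V x) := by have := hle x; linarith
      positivity
  have hfper : Function.Periodic f 1 := by
    intro x; simp only [hf, hper x]
  have hfint : ∀ t₁ t₂ : ℝ, IntervalIntegrable f MeasureTheory.volume t₁ t₂ :=
    fun t₁ t₂ => hfc.intervalIntegrable _ _
  have hcomp : (∫ s in q_a..q_b, f (s / ε)) = ε • ∫ x in q_a / ε..q_b / ε, f x :=
    intervalIntegral.integral_comp_div f hε.ne'
  set a' := q_a / ε with ha'
  set b' := q_b / ε with hb'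
  set L := b' - a' with hL
  have hεL : ε * L = q_b - q_a := by
    rw [hL, hb', ha']
    field_simp
  have hL2 : 2 ≤ L := by
    rw [← mul_le_mul_iff_right₀ hε, hεL]
    linarith
  set n : ℤ := ⌊L⌋ with hn
  have hnL : (n : ℝ) ≤ L := Int.floor_le L
  have hnL' : L - 1 < (n : ℝ) := Int.sub_one_lt_floor L
  have hn1 : (1 : ℝ) ≤ (n : ℝ) := by linarith
  set σ := ∫ x in (0:ℝ)..1, f x with hσ
  have hσnn : 0 ≤ σ :=
    intervalIntegral.integral_nonneg (by norm_num) (fun u _ => (hfpos u).le)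
  have hper_int : ∫ x in a'..a' + (n:ℝ), f x = n • σ := by
    have := hfper.intervalIntegral_add_zsmul_eq n a' hfint
    rw [zsmul_eq_mul, mul_one] at this
    rw [this, hσ, hfper.intervalIntegral_add_eq a' 0, zero_add]
  have hab' : a' + (n:ℝ) ≤ b' := by linarith
  have hsplit : (∫ x in a'..a' + (n:ℝ), f x) + ∫ x in a' + (n:ℝ)..b', f x
      = ∫ x in a'..b', f x :=
    intervalIntegral.integral_add_adjacent_intervals (hfint _ _) (hfint _ _)
  have htail : 0 ≤ ∫ x in a' + (n:ℝ)..b', f x :=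
    intervalIntegral.integral_nonneg hab' (fun u _ => (hfpos u).le)
  have hmain : (n : ℝ) * σ ≤ ∫ x in a'..b', f x := by
    rw [← hsplit, hper_int, zsmul_eq_mul]
    linarith
  rw [hcomp, smul_eq_mul]
  have hεn : (q_b - q_a) / 2 ≤ ε * (n : ℝ) := by
    have : ε * (L - 1) < ε * (n : ℝ) := by
      apply mul_lt_mul_of_pos_left hnL' hε
    rw [mul_sub, hεL, mul_one] at this
    linarith
  calc (q_b - q_a) / 2 * σ ≤ (ε * (n : ℝ)) * σ := mul_le_mul_of_nonneg_right hεn hσnn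
    _ = ε * ((n : ℝ) * σ) := by ring
    _ ≤ ε * ∫ x in a'..b', f x := by
        apply mul_le_mul_of_nonneg_left hmain hε.le

/-- Theorem 2.7 (compactness of the energies): if `E_ε > 0` realises the fixed
    travel time `T`, then along any positive sequence `ε_n → 0` the energies are
    bounded and bounded away from `0`, and some subsequence converges to a limit
    `Ē > 0`. -/
theorem bvp_fixed_time_energy_compactness
    (V : ℝ → ℝ) (hV : ContDiff ℝ 2 V) (hper : Function.Periodic V 1)
    (hmax : IsGreatest (Set.range V) 0)
    (T q_a q_b : ℝ) (hT : 0 < T) (hab : q_a < q_b)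
    (Eε : ℝ → ℝ)
    (hEpos : ∀ ε > (0:ℝ), 0 < Eε ε)
    (htime : ∀ ε > (0:ℝ),
      (∫ s in q_a..q_b, 1 / Real.sqrt (2 * (Eε ε - V (s / ε)))) = T) :
    ∀ εn : ℕ → ℝ, (∀ n, 0 < εn n) → Tendsto εn atTop (nhds 0) →
      (∃ M : ℝ, ∀ n, Eε (εn n) ≤ M) ∧
      (∃ m : ℝ, 0 < m ∧ ∀ n, m ≤ Eε (εn n)) ∧
      ∃ φ : ℕ → ℕ, StrictMono φ ∧ ∃ Ebar : ℝ, 0 < Ebar ∧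
        Tendsto (fun n => Eε (εn (φ n))) atTop (nhds Ebar) := by
  intro εn hεp hεlim
  obtain ⟨⟨x0, hx0⟩, hub⟩ := hmax
  have hle : ∀ x, V x ≤ 0 := fun x => hub ⟨x, rfl⟩
  have hVc : Continuous V := hV.continuous
  -- uniform upper bound
  have hM : ∀ ε > (0:ℝ), Eε ε ≤ (q_b - q_a) ^ 2 / (2 * T ^ 2) := by
    intro ε hε
    have hE : 0 < Eε ε := hEpos ε hε
    have hfc : Continuous (fun s => 1 / Real.sqrt (2 * (Eε ε - V (s / ε)))) := by
      apply Continuous.div continuous_const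
      · exact Real.continuous_sqrt.comp (by fun_prop)
      · intro s
        have : 0 < 2 * (Eε ε - V (s / ε)) := by have := hle (s / ε); linarith
        positivity
    have hs : 0 < Real.sqrt (2 * Eε ε) := Real.sqrt_pos.2 (by linarith)
    have hpt : ∀ s ∈ Set.Icc q_a q_b,
        1 / Real.sqrt (2 * (Eε ε - V (s / ε))) ≤ 1 / Real.sqrt (2 * Eε ε) := by
      intro s _
      exact one_div_le_one_div_of_le hs
        (Real.sqrt_le_sqrt (by have := hle (s / ε); linarith))
    have hTle := intervalIntegral.integral_mono_on hab.le
      (hfc.intervalIntegrable _ _)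
      (intervalIntegrable_const : IntervalIntegrable _ MeasureTheory.volume q_a q_b) hpt
    rw [htime ε hε, intervalIntegral.integral_const, smul_eq_mul] at hTle
    have hsq : Real.sqrt (2 * Eε ε) ^ 2 = 2 * Eε ε := Real.sq_sqrt (by linarith)
    have h2 : T * Real.sqrt (2 * Eε ε) ≤ q_b - q_a := by
      have h3 : ((q_b - q_a) * (1 / Real.sqrt (2 * Eε ε))) * Real.sqrt (2 * Eε ε)
          = q_b - q_a := by field_simp
      nlinarith
    rw [le_div_iff₀ (by positivity)]
    nlinarith [mul_le_mul h2 h2 (by positivity) (by linarith : (0:ℝ) ≤ q_b - q_a), hsq]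
  -- lower bound for small ε
  obtain ⟨c, hc0, hquad⟩ := quad_bound_aux V hV hle x0 hx0
  set K := Real.sqrt (2 * (1 + c)) with hK
  have hKpos : 0 < K := Real.sqrt_pos.2 (by linarith)
  set A := 2 * T / (q_b - q_a) with hA
  set δ := min 1 (Real.exp (-(2 * K * (|A| + 1)))) with hδ
  have hδpos : 0 < δ := lt_min one_pos (Real.exp_pos _)
  have hlow : ∀ ε, 0 < ε → ε ≤ (q_b - q_a) / 2 → δ < Eε ε := by
    intro ε hε hεs
    by_contra hcon
    push_neg at hcon
    have hE : 0 < Eε ε := hEpos ε hε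
    have hE1 : Eε ε ≤ 1 := le_trans hcon (min_le_left _ _)
    have hσlow := sigma_lower_aux V hVc hle x0 c hc0 hquad (Eε ε) hE hE1
    have hfper : Function.Periodic (fun x => 1 / Real.sqrt (2 * (Eε ε - V x))) 1 := by
      intro x; simp [hper x]
    have hbase : (∫ x in x0..x0 + 1, 1 / Real.sqrt (2 * (Eε ε - V x)))
        = ∫ x in (0:ℝ)..1, 1 / Real.sqrt (2 * (Eε ε - V x)) := by
      have := hfper.intervalIntegral_add_eq x0 0
      simpa using this
    have htge := time_ge_aux V hVc hper hle (Eε ε) hE q_a q_b ε hab hε hεs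
    rw [htime ε hε] at htge
    have hσA : (∫ x in (0:ℝ)..1, 1 / Real.sqrt (2 * (Eε ε - V x))) ≤ A := by
      rw [hA, le_div_iff₀ (by linarith : (0:ℝ) < q_b - q_a)]
      nlinarith
    have hlogE : Real.log (Eε ε) ≤ -(2 * K * (|A| + 1)) := by
      have h2 : Eε ε ≤ Real.exp (-(2 * K * (|A| + 1))) :=
        le_trans hcon (min_le_right _ _)
      calc Real.log (Eε ε) ≤ Real.log (Real.exp (-(2 * K * (|A| + 1)))) :=
            Real.log_le_log hE h2
        _ = -(2 * K * (|A| + 1)) := Real.log_exp _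
    have hlog1 : |A| + 1 ≤ Real.log (1 / Real.sqrt (Eε ε)) / K := by
      rw [one_div, Real.log_inv, Real.log_sqrt hE.le, le_div_iff₀ hKpos]
      linarith
    have hfin : |A| + 1 ≤ A := le_trans hlog1 (le_trans hσlow (hbase ▸ hσA))
    have := le_abs_self A
    linarith
  -- assemble
  refine ⟨⟨(q_b - q_a) ^ 2 / (2 * T ^ 2), fun n => hM _ (hεp n)⟩, ?_⟩
  obtain ⟨N, hN⟩ : ∃ N : ℕ, ∀ n ≥ N, εn n ≤ (q_b - q_a) / 2 := by
    have := hεlim.eventually_lt_const (show (0:ℝ) < (q_b - q_a) / 2 by linarith)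
    obtain ⟨N, hN⟩ := Filter.eventually_atTop.1 this
    exact ⟨N, fun n hn => (hN n hn).le⟩
  set F := (Finset.range (N + 1)).image (fun n => Eε (εn n)) with hF
  have hFne : F.Nonempty :=
    ⟨Eε (εn 0), Finset.mem_image.2 ⟨0, Finset.mem_range.2 (Nat.succ_pos N), rfl⟩⟩
  set m := min δ (F.min' hFne) with hm
  have hmpos : 0 < m := by
    refine lt_min hδpos ?_
    obtain ⟨k, -, hk⟩ := Finset.mem_image.1 (F.min'_mem hFne)
    rw [← hk]
    exact hEpos _ (hεp k)
  have hmle : ∀ n, m ≤ Eε (εn n) := by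
    intro n
    rcases le_or_gt n N with h | h
    · exact le_trans (min_le_right _ _)
        (F.min'_le _ (Finset.mem_image.2 ⟨n, Finset.mem_range.2 (Nat.lt_succ_of_le h), rfl⟩))
    · exact le_trans (min_le_left _ _) (hlow (εn n) (hεp n) (hN n h.le)).le
  refine ⟨⟨m, hmpos, hmle⟩, ?_⟩
  obtain ⟨Ebar, hEbar, φ, hφ, hconv⟩ :=
    (isCompact_Icc (a := m) (b := (q_b - q_a) ^ 2 / (2 * T ^ 2))).tendsto_subseq
      (x := fun n => Eε (εn n)) (fun n => ⟨hmle n, hM _ (hεp n)⟩)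
  exact ⟨φ, hφ, Ebar, lt_of_lt_of_le hmpos hEbar.1, hconv⟩
end

section
/- In one space dimension, for E > 0 and V C², 1-periodic with max V = 0, the effective travel time from q_a to q_b (q_a < q_b) at energy E obtained by the Maupertuis principle — namely the limit as ε → 0 of the reparametrisation time t_ε(s) = ∫_{q_a}^{q_a + s(q_b−q_a)} (2(E − V(γ/ε)))^{-1/2} dγ evaluated at s = 1 — equals σ(E)(q_b − q_a), which coincides with the effective time obtained from the homogenised Hamilton–Jacobi equation, 1/H̄'(p) · (q_b − q_a) where H̄(p) = E. -/
open Real intervalIntegral Filter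

open MeasureTheory

section aux
variable {V : ℝ → ℝ}

lemma aux_pos (hVle : ∀ x, V x ≤ 0) {α : ℝ} (hα : 0 < α) (t : ℝ) :
    0 < 2 * (α - V t) := by nlinarith [hVle t]

lemma aux_cont_inv (hV : Continuous V) (hVle : ∀ x, V x ≤ 0) {α : ℝ} (hα : 0 < α) :
    Continuous (fun t => 1 / Real.sqrt (2 * (α - V t))) := by
  apply continuous_const.div
  · exact (continuous_const.mul (continuous_const.sub hV)).sqrt
  · intro t
    exact ne_of_gt (Real.sqrt_pos.2 (aux_pos hVle hα t))

lemma aux_cont_sqrt (hV : Continuous V) (α : ℝ) :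
    Continuous (fun t => Real.sqrt (2 * (α - V t))) :=
  (continuous_const.mul (continuous_const.sub hV)).sqrt

lemma aux_hasDeriv (hV : Continuous V) (hVle : ∀ x, V x ≤ 0) {α : ℝ} (hα : 0 < α) :
    HasDerivAt (fun β => ∫ γ in (0:ℝ)..1, Real.sqrt (2 * (β - V γ)))
      (∫ γ in (0:ℝ)..1, 1 / Real.sqrt (2 * (α - V γ))) α := by
  have key := intervalIntegral.hasDerivAt_integral_of_dominated_loc_of_deriv_le
    (𝕜 := ℝ) (μ := volume) (a := (0:ℝ)) (b := 1)
    (F := fun x t => Real.sqrt (2 * (x - V t)))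
    (F' := fun x t => 1 / Real.sqrt (2 * (x - V t)))
    (x₀ := α) (bound := fun _ => 1 / Real.sqrt α)
    (Metric.ball_mem_nhds α (half_pos hα))
    (Filter.Eventually.of_forall fun x => (aux_cont_sqrt hV x).aestronglyMeasurable)
    ((aux_cont_sqrt hV α).intervalIntegrable 0 1)
    (aux_cont_inv hV hVle hα).aestronglyMeasurable
    ?_ ((continuous_const.intervalIntegrable 0 1)) ?_
  · exact key.2
  · refine Filter.Eventually.of_forall fun t _ x hx => ?_
    have hxα : α / 2 < x := by
      have h := abs_lt.1 (by simpa [Real.dist_eq] using Metric.mem_ball.1 hx)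
      linarith [h.1]
    have h1 : α ≤ 2 * (x - V t) := by nlinarith [hVle t]
    have h2 : (0:ℝ) < Real.sqrt (2 * (x - V t)) :=
      Real.sqrt_pos.2 (by nlinarith [hVle t])
    show ‖1 / Real.sqrt (2 * (x - V t))‖ ≤ 1 / Real.sqrt α
    rw [Real.norm_eq_abs, abs_of_nonneg (by positivity)]
    have hsq : Real.sqrt α ≤ Real.sqrt (2 * (x - V t)) := Real.sqrt_le_sqrt h1
    exact one_div_le_one_div_of_le (Real.sqrt_pos.2 hα) hsq
  · refine Filter.Eventually.of_forall fun t _ x hx => ?_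
    have hxα : α / 2 < x := by
      have h := abs_lt.1 (by simpa [Real.dist_eq] using Metric.mem_ball.1 hx)
      linarith [h.1]
    have hpos : (0:ℝ) < 2 * (x - V t) := by nlinarith [hVle t]
    have hinner : HasDerivAt (fun y => 2 * (y - V t)) 2 x := by
      simpa using ((hasDerivAt_id x).sub_const (V t)).const_mul 2
    have houter := (Real.hasDerivAt_sqrt (ne_of_gt hpos)).comp x hinner
    refine houter.congr_deriv ?_
    symm
    show (1:ℝ) / Real.sqrt (2 * (x - V t)) = 1 / (2 * Real.sqrt (2 * (x - V t))) * 2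
    have hs : Real.sqrt (2 * (x - V t)) ≠ 0 := ne_of_gt (Real.sqrt_pos.2 hpos)
    generalize Real.sqrt (2 * (x - V t)) = s at hs ⊢
    field_simp

lemma aux_tendsto {f : ℝ → ℝ} (hf : Continuous f) (hper : Function.Periodic f 1)
    (q_a q_b : ℝ) :
    Tendsto (fun ε : ℝ => ∫ γ in q_a..q_b, f (γ / ε)) (nhdsWithin 0 (Set.Ioi 0))
      (nhds ((∫ γ in (0:ℝ)..1, f γ) * (q_b - q_a))) := by
  have hfint : ∀ a b : ℝ, IntervalIntegrable f volume a b := fun a b =>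
    hf.intervalIntegrable a b
  set m : ℝ := ∫ γ in (0:ℝ)..1, f γ with hm
  set F : ℝ → ℝ := fun x => ∫ t in (0:ℝ)..x, f t with hF
  have hFd : ∀ x, HasDerivAt F (f x) x := fun x =>
    intervalIntegral.integral_hasDerivAt_right (hfint 0 x)
      (hf.stronglyMeasurable.stronglyMeasurableAtFilter) hf.continuousAt
  have hFc : Continuous F := continuous_iff_continuousAt.2 fun x => (hFd x).continuousAt
  have hFadd : ∀ x, F (x + 1) = F x + m := by
    intro x
    have h1 : F x + ∫ t in x..(x+1), f t = F (x + 1) :=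
      intervalIntegral.integral_add_adjacent_intervals (hfint 0 x) (hfint x (x+1))
    have h2 : (∫ t in x..(x+1), f t) = m := by
      rw [hper.intervalIntegral_add_eq x 0]; simp [hm]
    rw [← h1, h2]
  set G : ℝ → ℝ := fun x => F x - m * x with hG
  have hGper : Function.Periodic G 1 := by
    intro x; simp only [hG, hFadd x]; ring
  have hGc : Continuous G := hFc.sub (continuous_const.mul continuous_id)
  obtain ⟨C, hC⟩ := Bornology.IsBounded.exists_norm_le
    (hGper.isBounded_of_continuous one_ne_zero hGc)
  have hCb : ∀ x, |G x| ≤ C := fun x => hC (G x) ⟨x, rfl⟩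
  have heq : ∀ ε : ℝ, 0 < ε →
      (∫ γ in q_a..q_b, f (γ / ε)) = m * (q_b - q_a) + ε * (G (q_b/ε) - G (q_a/ε)) := by
    intro ε hε
    have hε' : ε ≠ 0 := ne_of_gt hε
    rw [intervalIntegral.integral_comp_div f hε']
    have h3 : (∫ x in q_a/ε..q_b/ε, f x) = F (q_b/ε) - F (q_a/ε) := by
      rw [← intervalIntegral.integral_interval_sub_left (hfint 0 (q_b/ε)) (hfint 0 (q_a/ε))]
    rw [smul_eq_mul, h3]
    have hFG : ∀ y, F y = G y + m * y := fun y => by simp [hG]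
    rw [hFG, hFG]
    field_simp
    ring
  have h0 : Tendsto (fun ε : ℝ => ε * (G (q_b/ε) - G (q_a/ε))) (nhdsWithin 0 (Set.Ioi 0))
      (nhds 0) := by
    apply squeeze_zero_norm' (a := fun ε => ε * (C + C))
    · filter_upwards [self_mem_nhdsWithin] with ε (hε : ε ∈ Set.Ioi 0)
      have : |G (q_b/ε) - G (q_a/ε)| ≤ C + C :=
        (abs_sub _ _).trans (add_le_add (hCb _) (hCb _))
      calc ‖ε * (G (q_b/ε) - G (q_a/ε))‖ = ε * |G (q_b/ε) - G (q_a/ε)| := by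
            rw [Real.norm_eq_abs, abs_mul, abs_of_pos hε]
        _ ≤ ε * (C + C) := by
            exact mul_le_mul_of_nonneg_left this (le_of_lt hε)
    · have : Tendsto (fun ε : ℝ => ε * (C + C)) (nhds 0) (nhds 0) := by
        simpa using (continuous_mul_right (C + C)).tendsto (0:ℝ)
      exact this.mono_left nhdsWithin_le_nhds
  have hlim : Tendsto (fun ε : ℝ => m * (q_b - q_a) + ε * (G (q_b/ε) - G (q_a/ε)))
      (nhdsWithin 0 (Set.Ioi 0)) (nhds (m * (q_b - q_a))) := by
    simpa using tendsto_const_nhds.add h0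
  apply hlim.congr'
  filter_upwards [self_mem_nhdsWithin] with ε (hε : ε ∈ Set.Ioi 0)
  exact (heq ε hε).symm
end aux

/-- Agreement of Maupertuis and Hamilton–Jacobi averaging in one dimension: the
    Maupertuis reparametrisation time from `q_a` to `q_b` converges to
    `σ(E)(q_b − q_a)`, which coincides with the effective time
    `(1/H̄'(p))(q_b − q_a)` from the homogenised Hamilton–Jacobi equation, where
    `H̄(p) = E`. -/
theorem maupertuis_agrees_with_hamilton_jacobi
    (V : ℝ → ℝ) (hV : ContDiff ℝ 2 V) (hper : Function.Periodic V 1)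
    (hmax : IsGreatest (Set.range V) 0)
    (E q_a q_b : ℝ) (hE : 0 < E) (hab : q_a < q_b)
    (H : ℝ → ℝ)
    (hH : ∀ α : ℝ, 0 < α → H (∫ γ in (0:ℝ)..1, Real.sqrt (2 * (α - V γ))) = α)
    (hHcont : ContinuousAt H (∫ γ in (0:ℝ)..1, Real.sqrt (2 * (E - V γ)))) :
    Tendsto (fun ε : ℝ => ∫ γ in q_a..q_b, 1 / Real.sqrt (2 * (E - V (γ / ε))))
        (nhdsWithin 0 (Set.Ioi 0))
        (nhds ((∫ γ in (0:ℝ)..1, 1 / Real.sqrt (2 * (E - V γ))) * (q_b - q_a))) ∧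
      H (∫ γ in (0:ℝ)..1, Real.sqrt (2 * (E - V γ))) = E ∧
      deriv H (∫ γ in (0:ℝ)..1, Real.sqrt (2 * (E - V γ))) ≠ 0 ∧
      (∫ γ in (0:ℝ)..1, 1 / Real.sqrt (2 * (E - V γ))) * (q_b - q_a) =
        (1 / deriv H (∫ γ in (0:ℝ)..1, Real.sqrt (2 * (E - V γ)))) * (q_b - q_a) := by
  have hVle : ∀ x, V x ≤ 0 := fun x => hmax.2 ⟨x, rfl⟩
  have hVc : Continuous V := hV.continuous
  have hfper : Function.Periodic (fun γ => 1 / Real.sqrt (2 * (E - V γ))) 1 := by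
    intro x; simp [hper x]
  -- the averaged density and its positivity
  have hσpos : 0 < ∫ γ in (0:ℝ)..1, 1 / Real.sqrt (2 * (E - V γ)) := by
    apply intervalIntegral_pos_of_pos ((aux_cont_inv hVc hVle hE).intervalIntegrable 0 1)
      (fun x => _) one_pos
    intro x
    exact div_pos one_pos (Real.sqrt_pos.2 (aux_pos hVle hE x))
  set p : ℝ → ℝ := fun α => ∫ γ in (0:ℝ)..1, Real.sqrt (2 * (α - V γ)) with hp
  have hHE : H (p E) = E := hH E hE
  have hpd : ∀ α : ℝ, 0 < α →
      HasDerivAt p (∫ γ in (0:ℝ)..1, 1 / Real.sqrt (2 * (α - V γ))) α :=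
    fun α hα => aux_hasDeriv hVc hVle hα
  have hmono : ∀ α β : ℝ, 0 < α → α < β → p α < p β := by
    intro α β hα hαβ
    have hsub : p β - p α
        = ∫ γ in (0:ℝ)..1, (Real.sqrt (2 * (β - V γ)) - Real.sqrt (2 * (α - V γ))) := by
      rw [intervalIntegral.integral_sub ((aux_cont_sqrt hVc β).intervalIntegrable 0 1)
        ((aux_cont_sqrt hVc α).intervalIntegrable 0 1)]
    have hposint : 0 < p β - p α := by
      rw [hsub]
      apply intervalIntegral_pos_of_pos
        (((aux_cont_sqrt hVc β).sub (aux_cont_sqrt hVc α)).intervalIntegrable 0 1)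
        (fun x => _) one_pos
      intro x
      have h1 : 2 * (α - V x) < 2 * (β - V x) := by linarith
      exact sub_pos.2 (Real.sqrt_lt_sqrt (le_of_lt (aux_pos hVle hα x)) h1)
    linarith
  have hpcont : ContinuousOn p (Set.Icc (E/2) (2*E)) := fun x hx =>
    ((hpd x (lt_of_lt_of_le (half_pos hE) hx.1)).continuousAt).continuousWithinAt
  have hpEs : p E ∈ Set.Ioo (p (E/2)) (p (2*E)) :=
    ⟨hmono _ _ (half_pos hE) (by linarith), hmono _ _ hE (by linarith)⟩
  have hfg : ∀ᶠ y in nhds (p E), p (H y) = y := by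
    filter_upwards [isOpen_Ioo.mem_nhds hpEs] with y hy
    obtain ⟨α, hαmem, hαy⟩ := intermediate_value_Icc (by linarith : E/2 ≤ 2*E) hpcont
      ⟨le_of_lt hy.1, le_of_lt hy.2⟩
    have hα0 : 0 < α := lt_of_lt_of_le (half_pos hE) hαmem.1
    have hHα : H (p α) = α := hH α hα0
    rw [← hαy, hHα]
  have hpE' : HasDerivAt p (∫ γ in (0:ℝ)..1, 1 / Real.sqrt (2 * (E - V γ))) (H (p E)) := by
    rw [hHE]; exact hpd E hE
  have hHd : HasDerivAt H (∫ γ in (0:ℝ)..1, 1 / Real.sqrt (2 * (E - V γ)))⁻¹ (p E) :=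
    HasDerivAt.of_local_left_inverse hHcont hpE' (ne_of_gt hσpos) hfg
  have hderiv : deriv H (p E) = (∫ γ in (0:ℝ)..1, 1 / Real.sqrt (2 * (E - V γ)))⁻¹ :=
    hHd.deriv
  refine ⟨?_, hHE, ?_, ?_⟩
  · exact aux_tendsto (aux_cont_inv hVc hVle hE) hfper q_a q_b
  · show deriv H (p E) ≠ 0
    rw [hderiv]
    exact inv_ne_zero (ne_of_gt hσpos)
  · show _ = (1 / deriv H (p E)) * (q_b - q_a)
    rw [hderiv, one_div, inv_inv]
end
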